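/- arXiv:1807.06477 — 10 statements merged into one kernel-verified Lean document; each statement's English description precedes it below -/
import Mathlib

section
/- Let Λ = ℤ² and let Γ ⊆ GL(Λ) be a finite subgroup such that every element of Γ has a non-zero fixed vector in Λ. Then Γ itself has a non-zero fixed vector in Λ. -/
private lemma invol2 (M : Matrix (Fin 2) (Fin 2) ℤ)
    (h0 : M.trace = 0) (h1 : M.det = -1) : M * M = 1 := by
  rw [Matrix.trace_fin_two] at h0
  rw [Matrix.det_fin_two] at h1
  ext i j
  fin_cases i <;> fin_cases j <;>
    simp [Matrix.mul_apply, Fin.sum_univ_two, Matrix.one_apply]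
  · linear_combination M 0 0 * h0 - h1
  · linear_combination M 0 1 * h0
  · linear_combination M 1 0 * h0
  · linear_combination M 1 1 * h0 - h1

private lemma unip2 (M : Matrix (Fin 2) (Fin 2) ℤ)
    (h0 : M.trace = 2) (h1 : M.det = 1) : (M - 1) * (M - 1) = 0 := by
  rw [Matrix.trace_fin_two] at h0
  rw [Matrix.det_fin_two] at h1
  ext i j
  fin_cases i <;> fin_cases j <;>
    simp [Matrix.mul_apply, Fin.sum_univ_two, Matrix.one_apply, Matrix.sub_apply]
  · linear_combination M 0 0 * h0 - h1
  · linear_combination M 0 1 * h0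
  · linear_combination M 1 0 * h0
  · linear_combination M 1 1 * h0 - h1

private lemma fixed_det_trace (M : Matrix (Fin 2) (Fin 2) ℤ) (v : Fin 2 → ℤ)
    (hv : v ≠ 0) (hMv : M.mulVec v = v) : M.det - M.trace + 1 = 0 := by
  have eq1 : M 0 0 * v 0 + M 0 1 * v 1 = v 0 := by
    have := congrFun hMv 0
    simpa [Matrix.mulVec, dotProduct, Fin.sum_univ_two] using this
  have eq2 : M 1 0 * v 0 + M 1 1 * v 1 = v 1 := by
    have := congrFun hMv 1
    simpa [Matrix.mulVec, dotProduct, Fin.sum_univ_two] using this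
  set Δ : ℤ := M.det - M.trace + 1 with hΔ
  have hΔ0 : Δ * v 0 = 0 := by
    rw [hΔ, Matrix.det_fin_two, Matrix.trace_fin_two]
    linear_combination (M 1 1 - 1) * eq1 - M 0 1 * eq2
  have hΔ1 : Δ * v 1 = 0 := by
    rw [hΔ, Matrix.det_fin_two, Matrix.trace_fin_two]
    linear_combination (- M 1 0) * eq1 + (M 0 0 - 1) * eq2
  have hne : v 0 ≠ 0 ∨ v 1 ≠ 0 := by
    by_contra hc
    push_neg at hc
    apply hv
    funext i
    fin_cases i <;> simp [hc.1, hc.2]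
  rcases hne with h0 | h1
  · exact (mul_eq_zero.mp hΔ0).resolve_right h0
  · exact (mul_eq_zero.mp hΔ1).resolve_right h1

private lemma unipotent_pow (N : Matrix (Fin 2) (Fin 2) ℤ) (hN : N * N = 0) :
    ∀ n : ℕ, (1 + N) ^ n = 1 + (n : ℤ) • N := by
  intro n
  induction n with
  | zero => simp
  | succ k ih =>
    rw [pow_succ, ih]
    push_cast
    rw [add_smul, one_smul, add_mul, mul_add, mul_add, one_mul, mul_one, one_mul,
      smul_mul_assoc, hN]
    simp
    abel

/-- If every element of a finite subgroup `Γ ⊆ GL(ℤ²)` has a non-zero fixed vector in `ℤ²`,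
then `Γ` has a common non-zero fixed vector. -/
theorem stmt0 (Γ : Subgroup (Matrix.GeneralLinearGroup (Fin 2) ℤ))
    (hfin : (Γ : Set (Matrix.GeneralLinearGroup (Fin 2) ℤ)).Finite)
    (h : ∀ γ ∈ Γ, ∃ v : Fin 2 → ℤ, v ≠ 0 ∧
      (γ : Matrix (Fin 2) (Fin 2) ℤ).mulVec v = v) :
    ∃ v : Fin 2 → ℤ, v ≠ 0 ∧ ∀ γ ∈ Γ,
      (γ : Matrix (Fin 2) (Fin 2) ℤ).mulVec v = v := by
  haveI : Finite Γ := hfin.to_subtype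
  have hdet : ∀ γ : Matrix.GeneralLinearGroup (Fin 2) ℤ,
      (γ : Matrix (Fin 2) (Fin 2) ℤ).det = 1 ∨
      (γ : Matrix (Fin 2) (Fin 2) ℤ).det = -1 := by
    intro γ
    have : IsUnit (γ : Matrix (Fin 2) (Fin 2) ℤ).det :=
      (Matrix.isUnit_iff_isUnit_det _).mp γ.isUnit
    exact Int.isUnit_iff.mp this
  -- any element of Γ with det 1 is the identity
  have key : ∀ γ ∈ Γ, (γ : Matrix (Fin 2) (Fin 2) ℤ).det = 1 → γ = 1 := by
    intro γ hγ hdet1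
    obtain ⟨v, hv, hfix⟩ := h γ hγ
    set M : Matrix (Fin 2) (Fin 2) ℤ := (γ : Matrix (Fin 2) (Fin 2) ℤ) with hM
    have htr : M.trace = 2 := by
      have := fixed_det_trace M v hv hfix
      omega
    have hN : (M - 1) * (M - 1) = 0 := unip2 M htr hdet1
    have hn : (⟨γ, hγ⟩ : Γ) ^ (orderOf (⟨γ, hγ⟩ : Γ)) = 1 := pow_orderOf_eq_one _
    set n := orderOf (⟨γ, hγ⟩ : Γ) with hn'
    have hnpos : 0 < n := orderOf_pos _
    have hγn : γ ^ n = 1 := by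
      have := congrArg (Subtype.val) hn
      simpa using this
    have hMn : M ^ n = 1 := by
      have := congrArg (fun u : Matrix.GeneralLinearGroup (Fin 2) ℤ =>
        (u : Matrix (Fin 2) (Fin 2) ℤ)) hγn
      simpa [Units.val_pow_eq_pow_val] using this
    have hpow := unipotent_pow (M - 1) hN n
    rw [add_sub_cancel] at hpow
    rw [hpow] at hMn
    have hzero : (n : ℤ) • (M - 1) = 0 := by
      have := hMn
      rwa [add_eq_left] at this
    have hM1 : M = 1 := by
      have h0 : M - 1 = 0 := by
        ext i j
        have := congrFun (congrFun hzero i) j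
        simp only [Matrix.smul_apply, smul_eq_mul, Matrix.zero_apply] at this
        have hn0 : (n : ℤ) ≠ 0 := by exact_mod_cast hnpos.ne'
        exact (mul_eq_zero.mp this).resolve_left hn0
      rw [sub_eq_zero] at h0
      exact h0
    exact Units.ext hM1
  -- any two nontrivial elements of Γ are equal
  have uniq : ∀ γ ∈ Γ, ∀ δ ∈ Γ, γ ≠ 1 → δ ≠ 1 → γ = δ := by
    intro γ hγ δ hδ hγ1 hδ1
    have hdγ : (γ : Matrix (Fin 2) (Fin 2) ℤ).det = -1 :=
      (hdet γ).resolve_left (fun hd => hγ1 (key γ hγ hd))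
    have hdδ : (δ : Matrix (Fin 2) (Fin 2) ℤ).det = -1 :=
      (hdet δ).resolve_left (fun hd => hδ1 (key δ hδ hd))
    have hmem : γ * δ ∈ Γ := Γ.mul_mem hγ hδ
    have hdprod : ((γ * δ : Matrix.GeneralLinearGroup (Fin 2) ℤ) :
        Matrix (Fin 2) (Fin 2) ℤ).det = 1 := by
      simp [Units.val_mul, Matrix.det_mul, hdγ, hdδ]
    have h1 : γ * δ = 1 := key _ hmem hdprod
    -- also γ² = 1
    have hmem2 : γ * γ ∈ Γ := Γ.mul_mem hγ hγ
    have hdprod2 : ((γ * γ : Matrix.GeneralLinearGroup (Fin 2) ℤ) :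
        Matrix (Fin 2) (Fin 2) ℤ).det = 1 := by
      simp [Units.val_mul, Matrix.det_mul, hdγ]
    have h2 : γ * γ = 1 := key _ hmem2 hdprod2
    have e1 : γ⁻¹ = δ := inv_eq_of_mul_eq_one_right h1
    have e2 : γ⁻¹ = γ := inv_eq_of_mul_eq_one_right h2
    exact e2.symm.trans e1
  -- conclude
  by_cases hall : ∀ γ ∈ Γ, γ = 1
  · refine ⟨![1, 0], ?_, ?_⟩
    · intro hc
      have := congrFun hc 0
      simp at this
    · intro γ hγ
      rw [hall γ hγ]
      simp
  · push_neg at hall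
    obtain ⟨γ₀, hγ₀, hγ₀1⟩ := hall
    obtain ⟨v, hv, hfix⟩ := h γ₀ hγ₀
    refine ⟨v, hv, ?_⟩
    intro γ hγ
    by_cases hγ1 : γ = 1
    · rw [hγ1]; simp
    · rw [uniq γ hγ γ₀ hγ₀ hγ1 hγ₀1]
      exact hfix
end

section
/- Let Λ = ℤ², let Γ ⊆ GL(Λ) be a finite subgroup, and let d > 6 be an integer. Suppose there is a vector v in Λ/dΛ that is invariant under the induced action of Γ and satisfies m·v ≠ 0 for all integers 1 ≤ m < d. Then there exists a non-zero Γ-invariant vector in Λ. -/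
open Matrix

private theorem ch2' (M : Matrix (Fin 2) (Fin 2) ℤ) :
    M * M = M.trace • M - M.det • (1 : Matrix (Fin 2) (Fin 2) ℤ) := by
  ext i j
  simp only [Matrix.sub_apply, Matrix.smul_apply, Matrix.mul_apply, Fin.sum_univ_two,
    Matrix.trace_fin_two, Matrix.det_fin_two, smul_eq_mul]
  fin_cases i <;> fin_cases j <;> simp [Matrix.one_apply] <;> ring

private theorem growth' (M : Matrix (Fin 2) (Fin 2) ℤ) (hdet : M.det = 1)
    (htr : 3 ≤ M.trace) (n : ℕ) (hn : 0 < n) (hMn : M ^ n = 1) : False := by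
  set s : ℕ → ℤ := fun k => (M ^ k).trace with hs
  have hs0 : s 0 = 2 := by simp [hs]
  have hs1 : s 1 = M.trace := by simp [hs]
  have hrec : ∀ k, s (k + 2) = M.trace * s (k + 1) - s k := by
    intro k
    have h2 : M ^ (k + 2) = M.trace • M ^ (k + 1) - M ^ k := by
      have e : M ^ (k + 2) = M ^ k * (M * M) := by rw [pow_add, pow_two]
      rw [e, ch2' M, hdet, mul_sub, one_smul, mul_smul_comm, mul_one, ← pow_succ]
    show (M ^ (k+2)).trace = _
    rw [h2, Matrix.trace_sub, Matrix.trace_smul, smul_eq_mul]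
  have key : ∀ k, 2 ≤ s k ∧ s k + 1 ≤ s (k + 1) := by
    intro k
    induction k with
    | zero =>
      have e : s (0 + 1) = s 1 := rfl
      constructor <;> omega
    | succ k ih =>
      obtain ⟨h1, h2⟩ := ih
      have h3 := hrec k
      have e : k + 1 + 1 = k + 2 := rfl
      rw [e]
      constructor
      · omega
      · nlinarith
  have mono : ∀ k : ℕ, (2 : ℤ) + k ≤ s k := by
    intro k
    induction k with
    | zero => simp [hs0]
    | succ k ih => have := (key k).2; push_cast; push_cast at ih; omega
  have hfin : s n = 2 := by simp [hs, hMn]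
  have := mono n
  omega

private theorem elt' {d : ℕ} (hd : 6 < d) (v : Fin 2 → ZMod d)
    (hord : ∀ m : ℕ, 0 < m → m < d → m • v ≠ 0)
    (M : Matrix (Fin 2) (Fin 2) ℤ) (hu : IsUnit M.det)
    (n : ℕ) (hn : 0 < n) (hMn : M ^ n = 1)
    (hv : (M.map (Int.cast : ℤ → ZMod d)).mulVec v = v) :
    M = 1 ∨ (M * M = 1 ∧ M.det = -1) := by
  haveI : NeZero d := ⟨by omega⟩
  have hdvd : ∀ k : ℤ, ((k : ZMod d)) • v = 0 → (d : ℤ) ∣ k := by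
    intro k hk
    by_contra h
    have h0 : (k : ZMod d) ≠ 0 := fun h' => h ((ZMod.intCast_zmod_eq_zero_iff_dvd k d).mp h')
    have hvpos : 0 < (k : ZMod d).val := Nat.pos_of_ne_zero (fun h' => h0 (by
      rwa [← ZMod.val_eq_zero]))
    refine hord (k : ZMod d).val hvpos (ZMod.val_lt _) ?_
    have heq : ((k : ZMod d).val • v) = ((k : ZMod d)) • v := by
      ext i
      simp [Pi.smul_apply, nsmul_eq_mul, ZMod.natCast_val, ZMod.cast_id]
    rw [heq, hk]
  -- the congruence coming from Cayley–Hamilton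
  have hA : (((1 : ℤ) - M.trace + M.det : ℤ) : ZMod d) • v = 0 := by
    have hmap : ((M * M).map (Int.cast : ℤ → ZMod d))
        = (M.map (Int.cast : ℤ → ZMod d)) * (M.map (Int.cast : ℤ → ZMod d)) := by
      ext i j
      simp [Matrix.mul_apply, Matrix.map_apply, Fin.sum_univ_two]
    have h2 : ((M * M).map (Int.cast : ℤ → ZMod d)).mulVec v = v := by
      rw [hmap, ← Matrix.mulVec_mulVec, hv, hv]
    rw [ch2' M] at h2
    have hv0 := congrFun hv 0
    have hv1 := congrFun hv 1
    ext i
    have h2i := congrFun h2 i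
    fin_cases i <;>
      simp only [Matrix.mulVec, dotProduct, Fin.sum_univ_two, Matrix.map_apply,
        Matrix.sub_apply, Matrix.smul_apply, Matrix.one_apply, smul_eq_mul,
        Pi.smul_apply, Pi.zero_apply, Fin.isValue, if_true, if_false,
        Matrix.cons_val_zero, Matrix.cons_val_one, Matrix.head_cons] at h2i hv0 hv1 ⊢ <;>
      push_cast at h2i hv0 hv1 ⊢ <;>
      first
        | linear_combination -h2i + (M.trace : ZMod d) * hv0
        | linear_combination -h2i + (M.trace : ZMod d) * hv1
  have hDvd : (d : ℤ) ∣ (1 - M.trace + M.det) := hdvd _ hA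
  have hδ : M.det = 1 ∨ M.det = -1 := Int.isUnit_iff.mp hu
  have hM2det : (M * M).det = 1 := by
    rw [Matrix.det_mul]
    rcases hδ with h | h <;> rw [h] <;> norm_num
  have hM2tr : (M * M).trace = M.trace * M.trace - 2 * M.det := by
    rw [ch2' M, Matrix.trace_sub, Matrix.trace_smul, Matrix.trace_smul, Matrix.trace_one]
    simp only [smul_eq_mul, Fintype.card_fin, Nat.cast_ofNat]
    ring
  have hM2n : (M * M) ^ n = 1 := by
    rw [← pow_two, ← pow_mul, mul_comm 2 n, pow_mul, hMn, one_pow]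
  have htrb : M.trace * M.trace - 2 * M.det ≤ 2 := by
    by_contra h
    exact growth' (M * M) hM2det (by omega) n hn hM2n
  rcases hδ with h1 | h1
  · left
    have ht2 : M.trace = 2 := by
      have hb : M.trace * M.trace ≤ 4 := by omega
      have htr1 : -2 ≤ M.trace ∧ M.trace ≤ 2 := by constructor <;> nlinarith
      rw [h1] at hDvd
      rcases eq_or_ne (1 - M.trace + 1) 0 with h' | h'
      · omega
      · exfalso
        have hle := Int.le_of_dvd (abs_pos.mpr h') ((dvd_abs _ _).mpr hDvd)
        have habs : |1 - M.trace + 1| ≤ 4 := by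
          rcases abs_cases (1 - M.trace + 1) with ⟨he, _⟩ | ⟨he, _⟩ <;> omega
        omega
    have hch := ch2' M
    rw [h1, ht2, one_smul, two_smul] at hch
    have hN : (M - 1) * (M - 1) = 0 := by
      have e1 : (M - 1) * (M - 1) = M * M - (M + M) + 1 := by noncomm_ring
      rw [e1, hch]
      noncomm_ring
    have hNM : (M - 1) * M = M - 1 := by
      have e1 : (M - 1) * M = (M - 1) * 1 + (M - 1) * (M - 1) := by noncomm_ring
      rw [e1, hN, mul_one, add_zero]
    have hpow : ∀ k : ℕ, M ^ k = 1 + (k : ℤ) • (M - 1) := by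
      intro k
      induction k with
      | zero => simp
      | succ k ih =>
        rw [pow_succ, ih, add_mul, one_mul, smul_mul_assoc, hNM]
        push_cast
        rw [add_smul, one_smul]
        abel
    have hfin := hpow n
    rw [hMn] at hfin
    have h0 : (n : ℤ) • (M - 1) = 0 := by
      have := hfin.symm
      rwa [add_eq_left] at this
    have hn0 : (n : ℤ) ≠ 0 := by exact_mod_cast hn.ne'
    have hM1 : M - 1 = 0 := by
      ext i j
      have hc := congrFun (congrFun h0 i) j
      simp only [Matrix.smul_apply, smul_eq_mul, Matrix.zero_apply] at hc
      exact (mul_eq_zero.mp hc).resolve_left hn0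
    exact sub_eq_zero.mp hM1
  · right
    have ht0 : M.trace = 0 := by nlinarith
    refine ⟨?_, h1⟩
    rw [ch2' M, ht0, h1]
    simp

/-- Let `Γ ⊆ GL₂(ℤ)` be a finite subgroup and `d > 6` an integer.  If there is a vector
`v ∈ (ℤ/dℤ)²` invariant under the reduction mod `d` of every element of `Γ` and with
`m • v ≠ 0` for all `1 ≤ m < d`, then `Γ` has a non-zero invariant vector in `ℤ²`. -/
theorem stmt2 (Γ : Subgroup (Matrix.GeneralLinearGroup (Fin 2) ℤ))
    (hfin : (Γ : Set (Matrix.GeneralLinearGroup (Fin 2) ℤ)).Finite)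
    (d : ℕ) (hd : 6 < d) (v : Fin 2 → ZMod d)
    (hinv : ∀ γ ∈ Γ,
      ((γ : Matrix (Fin 2) (Fin 2) ℤ).map (Int.cast : ℤ → ZMod d)).mulVec v = v)
    (hord : ∀ m : ℕ, 0 < m → m < d → m • v ≠ 0) :
    ∃ w : Fin 2 → ℤ, w ≠ 0 ∧ ∀ γ ∈ Γ,
      (γ : Matrix (Fin 2) (Fin 2) ℤ).mulVec w = w := by
  haveI : NeZero d := ⟨by omega⟩
  haveI : Finite ↥Γ := hfin.to_subtype
  have key : ∀ γ ∈ Γ, (γ : Matrix (Fin 2) (Fin 2) ℤ) = 1 ∨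
      ((γ : Matrix (Fin 2) (Fin 2) ℤ) * (γ : Matrix (Fin 2) (Fin 2) ℤ) = 1 ∧
        (γ : Matrix (Fin 2) (Fin 2) ℤ).det = -1) := by
    intro γ hγ
    set g : ↥Γ := ⟨γ, hγ⟩ with hg
    have hn : 0 < orderOf g := orderOf_pos g
    have hgn : g ^ orderOf g = 1 := pow_orderOf_eq_one g
    have h1 : γ ^ orderOf g = 1 := by
      have := congrArg (Subtype.val) hgn
      exact (SubmonoidClass.coe_pow g _).symm.trans this
    have hγn : (γ : Matrix (Fin 2) (Fin 2) ℤ) ^ orderOf g = 1 := by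
      have := congrArg (Units.val) h1
      simpa using this
    have hu : IsUnit (γ : Matrix (Fin 2) (Fin 2) ℤ).det :=
      (Matrix.isUnit_iff_isUnit_det _).mp γ.isUnit
    exact elt' hd v hord _ hu _ hn hγn (hinv γ hγ)
  by_cases hall : ∀ γ ∈ Γ, (γ : Matrix (Fin 2) (Fin 2) ℤ) = 1
  · refine ⟨![1, 0], ?_, fun γ hγ => by rw [hall γ hγ, Matrix.one_mulVec]⟩
    intro h
    have := congrFun h 0
    simp at this
  · push_neg at hall
    obtain ⟨σ, hσΓ, hσ1⟩ := hall
    obtain ⟨hσ2, hσdet⟩ := (key σ hσΓ).resolve_left hσ1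
    set S : Matrix (Fin 2) (Fin 2) ℤ := (σ : Matrix (Fin 2) (Fin 2) ℤ) with hS
    set u : Fin 2 → ℤ := fun i => ((v i).val : ℤ) with hu
    have hu' : ∀ i, ((u i : ℤ) : ZMod d) = v i := by
      intro i
      simp [hu, ZMod.natCast_val, ZMod.cast_id]
    have hcast : ∀ i, (((u + S.mulVec u) i : ℤ) : ZMod d) = (2 • v) i := by
      intro i
      have hvi := congrFun (hinv σ hσΓ) i
      simp only [Matrix.mulVec, dotProduct, Fin.sum_univ_two,
        Matrix.map_apply, Pi.add_apply, Pi.smul_apply] at hvi ⊢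
      push_cast
      rw [hu' 0, hu' 1, hu' i, two_smul]
      rw [← hS] at hvi
      linear_combination hvi
    refine ⟨u + S.mulVec u, ?_, ?_⟩
    · intro h
      refine hord 2 (by norm_num) (by omega) ?_
      ext i
      have h2 := hcast i
      rw [congrFun h i] at h2
      simpa using h2.symm
    · intro γ hγ
      rcases key γ hγ with h | h
      · rw [h, Matrix.one_mulVec]
      · have hmul : ((γ * σ : Matrix.GeneralLinearGroup (Fin 2) ℤ) :
            Matrix (Fin 2) (Fin 2) ℤ) = (γ : Matrix (Fin 2) (Fin 2) ℤ) * S := rfl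
        have hγσ : (γ : Matrix (Fin 2) (Fin 2) ℤ) * S = 1 := by
          rcases key _ (mul_mem hγ hσΓ) with h' | h'
          · rwa [hmul] at h'
          · exfalso
            have hdet := h'.2
            rw [hmul, Matrix.det_mul, h.2, hσdet] at hdet
            norm_num at hdet
        have hγS : (γ : Matrix (Fin 2) (Fin 2) ℤ) = S := by
          calc (γ : Matrix (Fin 2) (Fin 2) ℤ)
              = (γ : Matrix (Fin 2) (Fin 2) ℤ) * (S * S) := by rw [hσ2, mul_one]
            _ = ((γ : Matrix (Fin 2) (Fin 2) ℤ) * S) * S := by rw [mul_assoc]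
            _ = S := by rw [hγσ, one_mul]
        rw [hγS, Matrix.mulVec_add, Matrix.mulVec_mulVec, hσ2, Matrix.one_mulVec]
        abel
end

section
/- If an element γ of GL₂(ℤ) has finite order and possesses a non-zero fixed vector in ℤ², then γ² = 1. -/
/-- A finite-order element of `GL₂(ℤ)` with a non-zero fixed vector in `ℤ²` squares to `1`. -/
theorem stmt3 (γ : Matrix.GeneralLinearGroup (Fin 2) ℤ) (h : IsOfFinOrder γ)
    (hv : ∃ v : Fin 2 → ℤ, v ≠ 0 ∧ (γ : Matrix (Fin 2) (Fin 2) ℤ).mulVec v = v) :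
    γ ^ 2 = 1 := by
  obtain ⟨v, hv0, hfix⟩ := hv
  set A : Matrix (Fin 2) (Fin 2) ℤ := (γ : Matrix (Fin 2) (Fin 2) ℤ) with hA
  -- (A - 1) kills v
  have hker : (A - 1).mulVec v = 0 := by
    simp [Matrix.sub_mulVec, hfix]
  -- hence det (A - 1) = 0
  have hdet0 : (A - 1).det = 0 := by
    by_contra hd
    apply hv0
    have h1 : (A - 1).det • v = 0 := by
      have h2 := congrArg (Matrix.mulVec (A - 1).adjugate) hker
      rwa [Matrix.mulVec_mulVec, Matrix.adjugate_mul, Matrix.smul_mulVec,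
        Matrix.one_mulVec, Matrix.mulVec_zero] at h2
    funext i
    have h3 : (A - 1).det * v i = 0 := congrFun h1 i
    exact (mul_eq_zero.mp h3).resolve_left hd
  have hu : IsUnit A.det := (Matrix.isUnit_iff_isUnit_det A).mp ⟨γ, rfl⟩
  have hdet : A.det = 1 ∨ A.det = -1 := Int.isUnit_iff.mp hu
  have hd2 : A 0 0 * A 1 1 - A 0 1 * A 1 0 = A.det := (Matrix.det_fin_two A).symm
  have hd3 : (A 0 0 - 1) * (A 1 1 - 1) - A 0 1 * A 1 0 = 0 := by
    rw [Matrix.det_fin_two] at hdet0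
    simpa [Matrix.sub_apply, Matrix.one_apply] using hdet0
  rcases hdet with hdet | hdet
  · -- det = 1, trace = 2, A is unipotent, so A = 1
    have htr : A 0 0 + A 1 1 = 2 := by nlinarith [hd2, hd3]
    set N : Matrix (Fin 2) (Fin 2) ℤ := A - 1 with hN
    have hN2 : N * N = 0 := by
      ext i j
      fin_cases i <;> fin_cases j <;>
        simp [hN, Matrix.mul_apply, Fin.sum_univ_two, Matrix.sub_apply, Matrix.one_apply]
      · linear_combination (A 0 0 - 1) * htr - hd3
      · linear_combination A 0 1 * htr
      · linear_combination A 1 0 * htr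
      · linear_combination (A 1 1 - 1) * htr - hd3
    have hA1 : A = 1 + N := by rw [hN]; abel
    have hpow : ∀ n : ℕ, A ^ n = 1 + n • N := by
      intro n
      induction n with
      | zero => simp
      | succ n ih =>
        rw [pow_succ, ih, hA1]
        simp only [mul_add, add_mul, one_mul, mul_one, smul_mul_assoc, hN2, smul_zero,
          add_zero, succ_nsmul]
        abel
    obtain ⟨n, hn, hγn⟩ := isOfFinOrder_iff_pow_eq_one.mp h
    have hAn : A ^ n = 1 := by
      have := congrArg (Units.val) hγn
      simpa [Units.val_pow_eq_pow_val] using this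
    have hsmul : n • N = 0 := by
      have h5 := hpow n
      rw [hAn] at h5
      exact (left_eq_add.mp h5)
    have hN0 : N = 0 := by
      ext i j
      have h4 : (n : ℤ) * N i j = 0 := by
        have := congrFun (congrFun hsmul i) j
        simpa [Matrix.smul_apply] using this
      have hn' : (n : ℤ) ≠ 0 := Int.natCast_ne_zero.mpr hn.ne'
      exact (mul_eq_zero.mp h4).resolve_left hn'
    have hAone : A = 1 := by rw [hA1, hN0, add_zero]
    have : γ = 1 := Units.ext hAone
    rw [this, one_pow]
  · -- det = -1, trace = 0, so A² = 1 by Cayley–Hamilton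
    have htr : A 0 0 + A 1 1 = 0 := by nlinarith [hd2, hd3]
    have hA2 : A * A = 1 := by
      ext i j
      fin_cases i <;> fin_cases j <;>
        simp [Matrix.mul_apply, Fin.sum_univ_two, Matrix.one_apply]
      · linear_combination A 0 0 * htr - hd2 - hdet
      · linear_combination A 0 1 * htr
      · linear_combination A 1 0 * htr
      · linear_combination A 1 1 * htr - hd2 - hdet
    apply Units.ext
    simpa [Units.val_pow_eq_pow_val, pow_two] using hA2
end

section
/- Let K be a field of characteristic p > 2, let V be a finite-dimensional K-vector space, and let q be a quadratic form on V that does not represent 0 (i.e. q(v) = 0 implies v = 0). Then the orthogonal group O(V, q)(K) contains no element of order p. -/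
/-- Over a field of characteristic `p > 2`, the orthogonal group of a quadratic form that
does not represent `0` contains no element of order `p`. -/
theorem stmt5 (K : Type) [Field K] (p : ℕ) [CharP K p] (hp2 : 2 < p)
    (V : Type) [AddCommGroup V] [Module K V] [FiniteDimensional K V]
    (Q : QuadraticForm K V) (hQ : ∀ v : V, Q v = 0 → v = 0)
    (g : V ≃ₗ[K] V) (hg : ∀ v : V, Q (g v) = Q v) :
    orderOf g ≠ p := by
  intro hord
  have hp : p.Prime := by
    rcases CharP.char_is_prime_or_zero K p with h | h
    · exact h
    · omega
  rcases subsingleton_or_nontrivial V with hV | hV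
  · have hg1 : g = 1 := by ext v; exact Subsingleton.elim _ _
    rw [hg1, orderOf_one] at hord; omega
  haveI : Fact p.Prime := ⟨hp⟩
  haveI : CharP (Module.End K V) p := charP_of_injective_algebraMap' K (A := Module.End K V) p
  -- g^p = 1 as an endomorphism
  have hgp : (g : Module.End K V) ^ p = 1 := by
    have h1 : g ^ p = 1 := by rw [← hord]; exact pow_orderOf_eq_one g
    ext v
    have : (g ^ p) v = v := by rw [h1]; rfl
    simpa [Module.End.pow_apply, LinearEquiv.pow_apply] using this
  set f : Module.End K V := (g : Module.End K V) - 1 with hf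
  have hfp : f ^ p = 0 := by
    rw [hf, sub_pow_char_of_commute p (Commute.one_right _), hgp, one_pow, sub_self]
  have hfne : f ≠ 0 := by
    intro h0
    have hgne : g ≠ 1 := by
      intro h1; rw [h1, orderOf_one] at hord; omega
    apply hgne
    ext v
    have : f v = 0 := by rw [h0]; rfl
    simpa [hf, sub_eq_zero] using this
  classical
  have hex : ∃ m, f ^ m = 0 := ⟨p, hfp⟩
  set m := Nat.find hex with hmdef
  have hm0 : f ^ m = 0 := Nat.find_spec hex
  have hm2 : 2 ≤ m := by
    by_contra h
    interval_cases m
    · exact one_ne_zero hm0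
    · exact hfne (by simpa using hm0)
  have hne : f ^ (m - 1) ≠ 0 := Nat.find_min hex (by omega)
  obtain ⟨w, hw⟩ : ∃ w, (f ^ (m - 1)) w ≠ 0 := by
    by_contra h
    push_neg at h
    exact hne (LinearMap.ext fun w => h w)
  set v₁ := (f ^ (m - 1)) w with hv₁
  set v₂ := (f ^ (m - 2)) w with hv₂
  have h1 : f v₁ = 0 := by
    have : f ^ m = f * f ^ (m - 1) := by
      rw [← pow_succ']
      congr 1
      omega
    have := congrArg (fun t => t w) this
    simp only [hm0] at this
    simpa [hv₁] using this.symm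
  have h2 : f v₂ = v₁ := by
    have : f ^ (m - 1) = f * f ^ (m - 2) := by
      rw [← pow_succ']
      congr 1
      omega
    have := congrArg (fun t => t w) this
    simpa [hv₁, hv₂] using this.symm
  have hgv₁ : g v₁ = v₁ := by
    have h : g v₁ - v₁ = 0 := by
      have : f v₁ = g v₁ - v₁ := by simp [hf]
      rw [h1] at this; exact this.symm
    exact sub_eq_zero.mp h
  have hgv₂ : g v₂ = v₁ + v₂ := by
    have h : g v₂ - v₂ = v₁ := by
      have : f v₂ = g v₂ - v₂ := by simp [hf]
      rw [h2] at this; exact this.symm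
    rw [← h]; abel
  have e1 : Q (v₁ + v₂) = Q v₂ := by rw [← hgv₂]; exact hg v₂
  have e2 : Q (v₁ + (v₁ + v₂)) = Q (v₁ + v₂) := by
    have := hg (v₁ + v₂)
    rwa [map_add, hgv₁, hgv₂] at this
  have e3 : Q (v₁ + v₁) = 2 * 2 * Q v₁ := by
    rw [← two_smul K v₁, QuadraticMap.map_smul]
    norm_num
  have hadd := QuadraticMap.polar_add_right Q v₁ v₁ v₂
  simp only [QuadraticMap.polar] at hadd
  have key : (2 : K) * Q v₁ = 0 := by linear_combination -hadd + e2 - e3 - e1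
  have h2ne : (2 : K) ≠ 0 := by
    intro h
    have := (CharP.cast_eq_zero_iff K p 2).mp (by exact_mod_cast h)
    have := Nat.le_of_dvd (by norm_num) this
    omega
  have hQv₁ : Q v₁ = 0 := by
    rcases mul_eq_zero.mp key with h | h
    · exact absurd h h2ne
    · exact h
  exact hw (hQ v₁ hQv₁)
end

section
/- Let K be a field of characteristic ≠ 2 containing all roots of unity, V a finite-dimensional K-vector space, and q a quadratic form on V that does not represent 0 nontrivially. Then every element g of finite order in O(V,q)(K) satisfies g² = 1, and every finite subgroup of O(V,q)(K) is abelian of order at most 2^{dim V}. -/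
open Polynomial Module

section Aux

variable {K : Type} [Field K] {V : Type} [AddCommGroup V] [Module K V]

private lemma inv_apply_apply' (e : V ≃ₗ[K] V) (x : V) : e (e⁻¹ x) = x :=
  e.apply_symm_apply x

private lemma polar_invariant (Q : QuadraticForm K V) (f : V →ₗ[K] V)
    (hf : ∀ v, Q (f v) = Q v) (x y : V) :
    QuadraticMap.polar Q (f x) (f y) = QuadraticMap.polar Q x y := by
  simp only [QuadraticMap.polar, ← map_add, hf]

private lemma ker_step (h2 : (2 : K) ≠ 0) (Q : QuadraticForm K V)
    (hQ : ∀ v : V, Q v = 0 → v = 0)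
    (f : V →ₗ[K] V) (hf : ∀ v, Q (f v) = Q v) (l : K) (hl : l * l = 1) :
    ∀ v, (f - l • 1) ((f - l • 1) v) = 0 → (f - l • 1) v = 0 := by
  have hl0 : l ≠ 0 := by
    intro h0; rw [h0, zero_mul] at hl; exact zero_ne_one hl
  intro v h
  have happ : ∀ u, (f - l • (1 : V →ₗ[K] V)) u = f u - l • u := fun u => by
    simp [LinearMap.sub_apply, LinearMap.smul_apply]
  rw [happ, happ] at h
  rw [happ]
  set w := f v - l • v with hw
  have hfw : f w = l • w := by rwa [sub_eq_zero] at h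
  have hfv : f v = l • v + w := by rw [hw]; abel
  have e2 : QuadraticMap.polar Q v w
      = l * l * QuadraticMap.polar Q v w + l * (2 * Q w) := by
    calc QuadraticMap.polar Q v w
        = QuadraticMap.polar Q (f v) (f w) := (polar_invariant Q f hf v w).symm
      _ = QuadraticMap.polar Q (l • v + w) (l • w) := by rw [hfv, hfw]
      _ = l • QuadraticMap.polar Q (l • v + w) w := by
          rw [QuadraticMap.polar_smul_right]
      _ = l • (l • QuadraticMap.polar Q v w + QuadraticMap.polar Q w w) := by
          rw [QuadraticMap.polar_add_left, QuadraticMap.polar_smul_left]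
      _ = l • (l • QuadraticMap.polar Q v w + 2 • Q w) := by
          rw [QuadraticMap.polar_self]
      _ = l * l * QuadraticMap.polar Q v w + l * (2 * Q w) := by
          simp only [smul_eq_mul, nsmul_eq_mul, Nat.cast_ofNat]
          ring
  rw [hl, one_mul] at e2
  have hc : l * (2 * Q w) = 0 := left_eq_add.mp e2
  have hQw : Q w = 0 := by
    rcases mul_eq_zero.mp hc with h' | h'
    · exact absurd h' hl0
    · rcases mul_eq_zero.mp h' with h'' | h''
      · exact absurd h'' h2
      · exact h''
  exact hQ w hQw

private lemma ker_pow (h2 : (2 : K) ≠ 0) (Q : QuadraticForm K V)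
    (hQ : ∀ v : V, Q v = 0 → v = 0)
    (f : V →ₗ[K] V) (hf : ∀ v, Q (f v) = Q v) (l : K) (hl : l * l = 1) :
    ∀ (m : ℕ) (v : V), ((f - l • 1) ^ m) v = 0 → (f - l • 1) v = 0 := by
  intro m
  induction m with
  | zero =>
      intro v h
      simp only [pow_zero, Module.End.one_apply] at h
      simp [h]
  | succ m ih =>
      intro v h
      have h' : ((f - l • 1) ^ m) ((f - l • 1) v) = 0 := by
        rw [← Module.End.mul_apply, ← pow_succ]; exact h
      exact ker_step h2 Q hQ f hf l hl v (ih _ h')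

private lemma sq_eq_one' [FiniteDimensional K V] (hchar : ringChar K ≠ 2)
    (hroots : ∀ n : ℕ, 0 < n → (X ^ n - 1 : K[X]).Splits)
    (Q : QuadraticForm K V) (hQ : ∀ v : V, Q v = 0 → v = 0)
    (g : V ≃ₗ[K] V) (hg : ∀ v : V, Q (g v) = Q v) (hord : IsOfFinOrder g) :
    g ^ 2 = 1 := by
  classical
  have h2 : (2 : K) ≠ 0 := Ring.two_ne_zero hchar
  set f : V →ₗ[K] V := (g : V →ₗ[K] V) with hfdef
  have hfQ : ∀ v, Q (f v) = Q v := hg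
  obtain ⟨n, npos, hgn⟩ := hord.exists_pow_eq_one
  have hfn : f ^ n = 1 := by
    have h := map_pow (LinearEquiv.automorphismGroup.toLinearMapMonoidHom (R := K) (M := V)) g n
    rw [hgn] at h
    exact h.symm
  have haev : (Polynomial.aeval f) (X ^ n - 1 : K[X]) = 0 := by
    rw [map_sub, map_pow, aeval_X, map_one, hfn, sub_self]
  have hdvd : minpoly K f ∣ X ^ n - 1 := minpoly.dvd K f haev
  have hXn0 : (X ^ n - 1 : K[X]) ≠ 0 := by
    simpa using X_pow_sub_C_ne_zero npos (1 : K)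
  have hsplits : (minpoly K f).Splits :=
    Polynomial.Splits.of_dvd (hroots n npos) hXn0 hdvd
  have hint : IsIntegral K f := Algebra.IsIntegral.isIntegral f
  have hmon : (minpoly K f).Monic := minpoly.monic hint
  have hpm : ∀ r ∈ (minpoly K f).roots, r = 1 ∨ r = -1 := by
    intro r hr
    have hr' : (minpoly K f).IsRoot r := (Polynomial.mem_roots'.mp hr).2
    have hev : Module.End.HasEigenvalue f r := Module.End.hasEigenvalue_of_isRoot hr'
    obtain ⟨v, hv⟩ := hev.exists_hasEigenvector
    have h1 : Q v = r * r * Q v := by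
      conv_lhs => rw [← hfQ v]
      rw [hv.apply_eq_smul, QuadraticMap.map_smul, smul_eq_mul]
    have hQv : Q v ≠ 0 := fun h0 => hv.2 (hQ v h0)
    have hrr : r * r = 1 := by
      have h3 : (1 - r * r) * Q v = 0 := by linear_combination h1
      rcases mul_eq_zero.mp h3 with h4 | h4
      · linear_combination -h4
      · exact absurd h4 hQv
    exact mul_self_eq_one_iff.mp hrr
  obtain ⟨a, b, hab⟩ : ∃ a b : ℕ,
      (minpoly K f).roots = Multiset.replicate a 1 + Multiset.replicate b (-1) := by
    refine ⟨((minpoly K f).roots.filter (· = (1 : K))).card,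
      ((minpoly K f).roots.filter (fun r => ¬ r = (1 : K))).card, ?_⟩
    conv_lhs => rw [← Multiset.filter_add_not (fun r => r = (1 : K)) (minpoly K f).roots]
    congr 1
    · exact Multiset.eq_replicate_card.mpr (fun x hx => (Multiset.mem_filter.mp hx).2)
    · refine Multiset.eq_replicate_card.mpr (fun x hx => ?_)
      obtain ⟨hx1, hx2⟩ := Multiset.mem_filter.mp hx
      rcases hpm x hx1 with h | h
      · exact absurd h hx2
      · exact h
  have hmu : minpoly K f = (X - 1) ^ a * (X + 1) ^ b := by
    conv_lhs => rw [hsplits.eq_prod_roots_of_monic hmon]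
    rw [hab]
    simp [Multiset.map_replicate, Multiset.prod_replicate, sub_neg_eq_add]
  have hz : ((f - 1) ^ a) * ((f + 1) ^ b) = 0 := by
    have h0 := minpoly.aeval K f
    rw [hmu] at h0
    simpa [map_mul, map_pow, map_sub, map_add, aeval_X, map_one] using h0
  have key : ∀ v, f (f v) = v := by
    intro v
    have e1 : f - (1 : K) • (1 : V →ₗ[K] V) = f - 1 := by rw [one_smul]
    have e2 : f - (-1 : K) • (1 : V →ₗ[K] V) = f + 1 := by
      rw [neg_smul, one_smul, sub_neg_eq_add]
    have h1 : ((f - 1) ^ a) (((f + 1) ^ b) v) = 0 := by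
      rw [← Module.End.mul_apply, hz, LinearMap.zero_apply]
    have h1' : (f - 1) (((f + 1) ^ b) v) = 0 := by
      have := ker_pow h2 Q hQ f hfQ 1 (one_mul 1) a (((f + 1) ^ b) v) (by rw [e1]; exact h1)
      rwa [e1] at this
    have c2 : Commute (f - 1) (f + 1) :=
      ((Commute.refl f).add_right (Commute.one_right f)).sub_left (Commute.one_left _)
    have h3 : ((f + 1) ^ b) ((f - 1) v) = 0 := by
      rw [← Module.End.mul_apply, ← (c2.pow_right b).eq, Module.End.mul_apply]
      exact h1'
    have h4 : (f + 1) ((f - 1) v) = 0 := by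
      have := ker_pow h2 Q hQ f hfQ (-1) (by ring) b ((f - 1) v) (by rw [e2]; exact h3)
      rwa [e2] at this
    have h5 : f (f v - v) + (f v - v) = 0 := by
      simpa [LinearMap.add_apply, LinearMap.sub_apply, Module.End.one_apply] using h4
    have h6 : f (f v) - v = 0 := by
      rw [map_sub] at h5
      calc f (f v) - v = f (f v) - f v + (f v - v) := by abel
        _ = 0 := h5
    rw [sub_eq_zero] at h6
    exact h6
  refine LinearEquiv.ext fun v => ?_
  have : (g ^ 2) v = g (g v) := by rw [pow_two]; rfl
  rw [this]
  exact key v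

private def restrictHom (G : Subgroup (V ≃ₗ[K] V)) (W : Submodule K V)
    (hW : ∀ h ∈ G, ∀ x ∈ W, h x ∈ W) : ↥G →* (W ≃ₗ[K] W) where
  toFun h := LinearEquiv.ofLinear
    (LinearMap.restrict ((h : V ≃ₗ[K] V) : V →ₗ[K] V) (hW _ h.2))
    (LinearMap.restrict (((h⁻¹ : ↥G) : V ≃ₗ[K] V) : V →ₗ[K] V) (hW _ (h⁻¹).2))
    (by
      ext x
      simp [LinearMap.restrict_apply, inv_apply_apply'])
    (by
      ext x
      simp only [LinearMap.coe_comp, Function.comp_apply, LinearMap.restrict_apply,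
        LinearMap.id_coe, id_eq, LinearEquiv.coe_coe, InvMemClass.coe_inv]
      exact (h : V ≃ₗ[K] V).symm_apply_apply x)
  map_one' := LinearEquiv.ext fun x => rfl
  map_mul' h₁ h₂ := LinearEquiv.ext fun x => rfl

private lemma card_le_of_involutive {K : Type} [Field K] (h2 : (2 : K) ≠ 0) (d : ℕ) :
    ∀ (V : Type) [AddCommGroup V] [Module K V] [FiniteDimensional K V]
      (G : Subgroup (V ≃ₗ[K] V)), Module.finrank K V ≤ d → (∀ g ∈ G, g * g = 1) →
      (G : Set (V ≃ₗ[K] V)).Finite → Nat.card ↥G ≤ 2 ^ Module.finrank K V := by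
  induction d with
  | zero =>
      intro V _ _ _ G hr hinv hfin
      have h0 : Module.finrank K V = 0 := Nat.le_zero.mp hr
      haveI : Subsingleton V := Module.finrank_zero_iff.mp h0
      haveI : Subsingleton (V ≃ₗ[K] V) :=
        ⟨fun e e' => LinearEquiv.ext fun v => Subsingleton.elim _ _⟩
      haveI : Unique ↥G := ⟨⟨1⟩, fun a => Subtype.ext (Subsingleton.elim _ _)⟩
      rw [Nat.card_unique]
      exact Nat.one_le_two_pow
  | succ d ih =>
      intro V _ _ _ G hr hinv hfin
      classical
      by_cases hle : Module.finrank K V ≤ d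
      · exact ih V G hle hinv hfin
      have hdim : Module.finrank K V = d + 1 := le_antisymm hr (lt_of_not_ge hle)
      have hcomm : ∀ a ∈ G, ∀ b ∈ G, a * b = b * a := by
        intro a ha b hb
        have h1 := hinv _ (mul_mem ha hb)
        calc a * b = (a * b)⁻¹ := (inv_eq_of_mul_eq_one_right h1).symm
          _ = b⁻¹ * a⁻¹ := mul_inv_rev a b
          _ = b * a := by
              rw [inv_eq_of_mul_eq_one_right (hinv a ha),
                inv_eq_of_mul_eq_one_right (hinv b hb)]
      by_cases hB : ∃ g ∈ G, (∃ v : V, g v ≠ v) ∧ (∃ v : V, g v ≠ -v)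
      · obtain ⟨g, hgG, hex1, hex2⟩ := hB
        have hgg : ∀ v : V, g (g v) = v := by
          intro v
          exact congrArg (fun (e : V ≃ₗ[K] V) => e v) (hinv g hgG)
        set S : Submodule K V := LinearMap.ker (((g : V →ₗ[K] V)) - 1) with hSdef
        set T : Submodule K V := LinearMap.ker (((g : V →ₗ[K] V)) + 1) with hTdef
        have memS : ∀ x, x ∈ S ↔ g x = x := by
          intro x
          rw [hSdef]
          simp [LinearMap.mem_ker, LinearMap.sub_apply, sub_eq_zero]
        have memT : ∀ x, x ∈ T ↔ g x = -x := by
          intro x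
          rw [hTdef]
          simp [LinearMap.mem_ker, LinearMap.add_apply, add_eq_zero_iff_eq_neg]
        have hsS : ∀ v : V, (2⁻¹ : K) • (v + g v) ∈ S := by
          intro v
          rw [memS, map_smul, map_add, hgg, add_comm]
        have htT : ∀ v : V, (2⁻¹ : K) • (v - g v) ∈ T := by
          intro v
          rw [memT, map_smul, map_sub, hgg, ← neg_sub, smul_neg]
        have hsum : ∀ v : V, (2⁻¹ : K) • (v + g v) + (2⁻¹ : K) • (v - g v) = v := by
          intro v
          rw [← smul_add]
          have h' : (v + g v) + (v - g v) = (2 : K) • v := by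
            rw [two_smul]; abel
          rw [h', smul_smul, inv_mul_cancel₀ h2, one_smul]
        have hsup : S ⊔ T = ⊤ := by
          rw [eq_top_iff]
          intro v _
          exact Submodule.mem_sup.mpr ⟨_, hsS v, _, htT v, hsum v⟩
        have hinf : S ⊓ T = ⊥ := by
          rw [eq_bot_iff]
          intro v hv
          have hv1 : g v = v := (memS v).mp hv.1
          have hv2 : g v = -v := (memT v).mp hv.2
          have hvv : v = -v := hv1.symm.trans hv2
          have h2v : (2 : K) • v = 0 := by
            rw [two_smul]
            exact add_eq_zero_iff_eq_neg.mpr hvv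
          rcases smul_eq_zero.mp h2v with h' | h'
          · exact absurd h' h2
          · simpa using h'
        have hrank : Module.finrank K S + Module.finrank K T = Module.finrank K V := by
          have h' := Submodule.finrank_sup_add_finrank_inf_eq S T
          rw [hsup, hinf] at h'
          simpa [finrank_top] using h'.symm
        have hS0 : S ≠ ⊥ := by
          intro hbot
          obtain ⟨v, hv⟩ := hex2
          have h' := hsS v
          rw [hbot, Submodule.mem_bot] at h'
          rcases smul_eq_zero.mp h' with h'' | h''
          · exact inv_ne_zero h2 h''
          · exact hv (neg_eq_of_add_eq_zero_right h'').symm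
        have hT0 : T ≠ ⊥ := by
          intro hbot
          obtain ⟨v, hv⟩ := hex1
          have h' := htT v
          rw [hbot, Submodule.mem_bot] at h'
          rcases smul_eq_zero.mp h' with h'' | h''
          · exact inv_ne_zero h2 h''
          · rw [sub_eq_zero] at h''
            exact hv h''.symm
        have hfS : 1 ≤ Module.finrank K S :=
          Nat.pos_of_ne_zero (fun h' => hS0 (Submodule.finrank_eq_zero.mp h'))
        have hfT : 1 ≤ Module.finrank K T :=
          Nat.pos_of_ne_zero (fun h' => hT0 (Submodule.finrank_eq_zero.mp h'))
        have hSd : Module.finrank K S ≤ d := by omega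
        have hTd : Module.finrank K T ≤ d := by omega
        have hSmap : ∀ h ∈ G, ∀ x ∈ S, h x ∈ S := by
          intro h hh x hx
          rw [memS] at hx ⊢
          calc g (h x) = (g * h) x := rfl
            _ = (h * g) x := by rw [hcomm g hgG h hh]
            _ = h (g x) := rfl
            _ = h x := by rw [hx]
        have hTmap : ∀ h ∈ G, ∀ x ∈ T, h x ∈ T := by
          intro h hh x hx
          rw [memT] at hx ⊢
          calc g (h x) = (g * h) x := rfl
            _ = (h * g) x := by rw [hcomm g hgG h hh]
            _ = h (g x) := rfl
            _ = -(h x) := by rw [hx, map_neg]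
        haveI : Finite ↥G := hfin.to_subtype
        set ΦS := restrictHom G S hSmap with hΦS
        set ΦT := restrictHom G T hTmap with hΦT
        set Φ := ΦS.prod ΦT with hΦ
        have hΦinj : Function.Injective Φ := by
          rw [injective_iff_map_eq_one]
          intro x hx
          have h1 : ΦS x = 1 := congrArg Prod.fst hx
          have h2' : ΦT x = 1 := congrArg Prod.snd hx
          have hxS : ∀ s : V, s ∈ S → (x : V ≃ₗ[K] V) s = s := by
            intro s hs
            have := congrArg (fun (e : ↥S ≃ₗ[K] ↥S) => ((e ⟨s, hs⟩ : ↥S) : V)) h1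
            simpa [hΦS, restrictHom, LinearMap.restrict_apply] using this
          have hxT : ∀ t : V, t ∈ T → (x : V ≃ₗ[K] V) t = t := by
            intro t ht
            have := congrArg (fun (e : ↥T ≃ₗ[K] ↥T) => ((e ⟨t, ht⟩ : ↥T) : V)) h2'
            simpa [hΦT, restrictHom, LinearMap.restrict_apply] using this
          have hx1 : (x : V ≃ₗ[K] V) = 1 := by
            refine LinearEquiv.ext fun v => ?_
            have hvst : v ∈ S ⊔ T := by rw [hsup]; exact Submodule.mem_top
            obtain ⟨s, hs, t, ht, hst⟩ := Submodule.mem_sup.mp hvst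
            calc (x : V ≃ₗ[K] V) v = (x : V ≃ₗ[K] V) s + (x : V ≃ₗ[K] V) t := by
                  rw [← map_add, hst]
              _ = s + t := by rw [hxS s hs, hxT t ht]
              _ = v := hst
          exact Subtype.ext hx1
        set P := ΦS.range with hP
        set Qr := ΦT.range with hQr
        haveI : Finite ↥P := by
          have h' : (P : Set (↥S ≃ₗ[K] ↥S)).Finite := by
            rw [hP, MonoidHom.coe_range]
            exact Set.finite_range ΦS
          exact h'.to_subtype
        haveI : Finite ↥Qr := by
          have h' : (Qr : Set (↥T ≃ₗ[K] ↥T)).Finite := by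
            rw [hQr, MonoidHom.coe_range]
            exact Set.finite_range ΦT
          exact h'.to_subtype
        have hcard : Nat.card ↥G ≤ Nat.card (↥P × ↥Qr) := by
          apply Nat.card_le_card_of_injective
            (f := fun (x : ↥G) => ((⟨ΦS x, ⟨x, rfl⟩⟩ : ↥P), (⟨ΦT x, ⟨x, rfl⟩⟩ : ↥Qr)))
          intro x y hxy
          apply hΦinj
          have hA := congrArg (fun p => ((p.1 : ↥P) : ↥S ≃ₗ[K] ↥S)) hxy
          have hBB := congrArg (fun p => ((p.2 : ↥Qr) : ↥T ≃ₗ[K] ↥T)) hxy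
          exact Prod.ext hA hBB
        have hPinv : ∀ p ∈ P, p * p = 1 := by
          intro p hp
          obtain ⟨x, rfl⟩ := hp
          rw [← map_mul, show x * x = 1 from Subtype.ext (hinv x.1 x.2), map_one]
        have hQinv : ∀ q ∈ Qr, q * q = 1 := by
          intro q hq
          obtain ⟨x, rfl⟩ := hq
          rw [← map_mul, show x * x = 1 from Subtype.ext (hinv x.1 x.2), map_one]
        have hPfin : (P : Set (↥S ≃ₗ[K] ↥S)).Finite := Set.toFinite _
        have hQfin : (Qr : Set (↥T ≃ₗ[K] ↥T)).Finite := Set.toFinite _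
        have hPcard : Nat.card ↥P ≤ 2 ^ Module.finrank K ↥S := ih ↥S P hSd hPinv hPfin
        have hQcard : Nat.card ↥Qr ≤ 2 ^ Module.finrank K ↥T := ih ↥T Qr hTd hQinv hQfin
        calc Nat.card ↥G ≤ Nat.card (↥P × ↥Qr) := hcard
          _ = Nat.card ↥P * Nat.card ↥Qr := Nat.card_prod _ _
          _ ≤ 2 ^ Module.finrank K ↥S * 2 ^ Module.finrank K ↥T :=
              Nat.mul_le_mul hPcard hQcard
          _ = 2 ^ (Module.finrank K ↥S + Module.finrank K ↥T) := (pow_add 2 _ _).symm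
          _ = 2 ^ Module.finrank K V := by rw [hrank]
      · push_neg at hB
        have hone : 1 ≤ Module.finrank K V := by omega
        have hpow : (2 : ℕ) ≤ 2 ^ Module.finrank K V := by
          calc (2 : ℕ) = 2 ^ 1 := (pow_one 2).symm
            _ ≤ 2 ^ Module.finrank K V := Nat.pow_le_pow_right (by norm_num) hone
        by_cases he : ∃ e ∈ G, ∀ v : V, e v = -v
        · obtain ⟨e, heG, hev⟩ := he
          have hsub : (G : Set (V ≃ₗ[K] V)) ⊆ {1, e} := by
            intro x hx
            by_cases h1 : ∀ v : V, x v = v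
            · exact Or.inl (LinearEquiv.ext h1)
            · push_neg at h1
              have hxv := hB x hx h1
              right
              exact LinearEquiv.ext fun v => by rw [hxv v, hev v]
          calc Nat.card ↥G = (G : Set (V ≃ₗ[K] V)).ncard :=
                Nat.card_coe_set_eq _
            _ ≤ ({1, e} : Set (V ≃ₗ[K] V)).ncard :=
                Set.ncard_le_ncard hsub ((Set.finite_singleton e).insert 1)
            _ ≤ 2 := by
                have h' := Set.ncard_insert_le (1 : V ≃ₗ[K] V) ({e} : Set (V ≃ₗ[K] V))
                simpa [Set.ncard_singleton] using h'
            _ ≤ 2 ^ Module.finrank K V := hpow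
        · have hsub : (G : Set (V ≃ₗ[K] V)) ⊆ {1} := by
            intro x hx
            by_cases h1 : ∀ v : V, x v = v
            · exact LinearEquiv.ext h1
            · push_neg at h1
              exact absurd ⟨x, hx, hB x hx h1⟩ he
          calc Nat.card ↥G = (G : Set (V ≃ₗ[K] V)).ncard :=
                Nat.card_coe_set_eq _
            _ ≤ ({1} : Set (V ≃ₗ[K] V)).ncard :=
                Set.ncard_le_ncard hsub (Set.finite_singleton 1)
            _ ≤ 2 ^ Module.finrank K V := by
                rw [Set.ncard_singleton]
                exact Nat.one_le_two_pow

end Aux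

/-- Let `K` be a field of characteristic `≠ 2` containing all roots of unity and `q` a
quadratic form on a finite-dimensional `K`-vector space `V` that does not represent `0`
nontrivially.  Then every finite-order element `g` of `O(V,q)(K)` satisfies `g² = 1`, and
every finite subgroup of `O(V,q)(K)` is abelian of order at most `2 ^ dim V`. -/
theorem stmt6 (K : Type) [Field K] (hchar : ringChar K ≠ 2)
    (hroots : ∀ n : ℕ, 0 < n → (Polynomial.X ^ n - 1 : Polynomial K).Splits)
    (V : Type) [AddCommGroup V] [Module K V] [FiniteDimensional K V]
    (Q : QuadraticForm K V) (hQ : ∀ v : V, Q v = 0 → v = 0) :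
    (∀ g : V ≃ₗ[K] V, (∀ v : V, Q (g v) = Q v) → IsOfFinOrder g → g ^ 2 = 1) ∧
    (∀ G : Subgroup (V ≃ₗ[K] V), (∀ g ∈ G, ∀ v : V, Q (g v) = Q v) →
      (G : Set (V ≃ₗ[K] V)).Finite →
      (∀ a ∈ G, ∀ b ∈ G, a * b = b * a) ∧ Nat.card G ≤ 2 ^ Module.finrank K V) := by
  have h2 : (2 : K) ≠ 0 := Ring.two_ne_zero hchar
  constructor
  · intro g hg hord
    exact sq_eq_one' hchar hroots Q hQ g hg hord
  · intro G hGQ hGfin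
    haveI : Finite ↥G := hGfin.to_subtype
    have hinv : ∀ g ∈ G, g * g = 1 := by
      intro g hg
      have hfo : IsOfFinOrder g := by
        have h1 : IsOfFinOrder (⟨g, hg⟩ : ↥G) := isOfFinOrder_of_finite _
        simpa using G.subtype.isOfFinOrder h1
      have h' := sq_eq_one' hchar hroots Q hQ g (hGQ g hg) hfo
      rwa [pow_two] at h'
    refine ⟨?_, ?_⟩
    · intro a ha b hb
      have h1 := hinv _ (mul_mem ha hb)
      calc a * b = (a * b)⁻¹ := (inv_eq_of_mul_eq_one_right h1).symm
        _ = b⁻¹ * a⁻¹ := mul_inv_rev a b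
        _ = b * a := by
            rw [inv_eq_of_mul_eq_one_right (hinv a ha),
              inv_eq_of_mul_eq_one_right (hinv b hb)]
    · exact card_le_of_involutive h2 (Module.finrank K V) V G le_rfl hinv hGfin
end

section
/- Let K be a field containing all roots of unity, let a ∈ K*, and suppose α is a root of y^m - a in an algebraic closure of K, with char K not dividing m. Let r be the minimal positive integer such that α^r ∈ K. Then r divides m and the polynomial y^r - α^r is irreducible over K. -/
open Polynomial

/-- Kummer-theoretic step: `K` a field containing all roots of unity, `a ∈ K*`, `α` a root of
`y^m - a` in an algebraic closure of `K`, with `char K ∤ m`.  If `r` is the minimal positive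
integer with `α^r ∈ K`, then `r ∣ m` and `y^r - α^r` is irreducible over `K`. -/
theorem stmt8 (K : Type) [Field K]
    (hroots : ∀ n : ℕ, 0 < n → (Polynomial.X ^ n - 1 : Polynomial K).Splits)
    (m : ℕ) (hm : 0 < m) (hcharm : ¬ (ringChar K ∣ m))
    (a : Kˣ) (α : AlgebraicClosure K)
    (hα : α ^ m = algebraMap K (AlgebraicClosure K) (a : K))
    (r : ℕ) (hr : 0 < r)
    (hmem : ∃ b : K, algebraMap K (AlgebraicClosure K) b = α ^ r)
    (hmin : ∀ s : ℕ, 0 < s → (∃ b : K, algebraMap K (AlgebraicClosure K) b = α ^ s) → r ≤ s) :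
    r ∣ m ∧ ∀ b : K, algebraMap K (AlgebraicClosure K) b = α ^ r →
      Irreducible (Polynomial.X ^ r - Polynomial.C b) := by
  set f : K →+* AlgebraicClosure K := algebraMap K (AlgebraicClosure K) with hf
  have hα0 : α ≠ 0 := by
    intro h
    rw [h, zero_pow hm.ne'] at hα
    exact a.ne_zero ((_root_.map_eq_zero f).mp hα.symm)
  obtain ⟨b, hb⟩ := hmem
  have hb0 : b ≠ 0 := by
    intro h
    rw [h, map_zero] at hb
    exact pow_ne_zero r hα0 hb.symm
  have hfa0 : f (a : K) ≠ 0 := by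
    rw [← hα]; exact pow_ne_zero m hα0
  -- roots of unity in L lie in the range of f
  have hrou : ∀ z : AlgebraicClosure K, z ^ m = 1 → z ∈ f.fieldRange := by
    intro z hz
    have h1 : ((X ^ m - 1 : K[X])).Monic := by
      simpa using monic_X_pow_sub_C (1 : K) hm.ne'
    have hne : ((X ^ m - 1 : K[X]).map f) ≠ 0 := (h1.map f).ne_zero
    have hzr : z ∈ ((X ^ m - 1 : K[X]).map f).roots := by
      rw [mem_roots hne]
      simp [IsRoot, hz]
    rw [(hroots m hm).roots_map f] at hzr
    obtain ⟨w, _, hw⟩ := Multiset.mem_map.mp hzr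
    exact ⟨w, hw⟩
  have hint : IsIntegral K α := Algebra.IsIntegral.isIntegral α
  set p := minpoly K α with hp
  have hpmonic : p.Monic := minpoly.monic hint
  set d := p.natDegree with hd
  have hdpos : 0 < d := minpoly.natDegree_pos hint
  have hdvd : p ∣ X ^ m - C (a : K) :=
    minpoly.dvd K α (by rw [map_sub, map_pow, aeval_X, aeval_C, hα, sub_self])
  set q : (AlgebraicClosure K)[X] := p.map f with hq
  have hqmonic : q.Monic := hpmonic.map f
  have hqsplits : q.Splits := IsAlgClosed.splits q
  have hcard : q.roots.card = d := by
    rw [splits_iff_card_roots.mp hqsplits, hq, natDegree_map]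
  -- every root β of q satisfies β^m = f a
  have hroot_pow : ∀ β ∈ q.roots, β ^ m = f (a : K) := by
    intro β hβ
    have hqdvd : q ∣ (X ^ m - C (f (a : K))) := by
      have := Polynomial.map_dvd f hdvd
      simpa [Polynomial.map_sub, Polynomial.map_pow] using this
    have h0 : Polynomial.eval β (X ^ m - C (f (a : K))) = 0 :=
      eval_eq_zero_of_dvd_of_eval_eq_zero hqdvd ((mem_roots'.mp hβ).2)
    simpa [sub_eq_zero] using h0
  -- the normalized product of roots is a product of roots of unity, hence in the range
  set c : AlgebraicClosure K := (q.roots.map (fun β => β / α)).prod with hc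
  have hcmem : c ∈ f.fieldRange := by
    refine Subfield.multiset_prod_mem _ _ ?_
    intro x hx
    obtain ⟨β, hβ, hβx⟩ := Multiset.mem_map.mp hx
    refine hrou x ?_
    rw [← hβx, div_pow, hroot_pow β hβ, ← hα, div_self (pow_ne_zero m hα0)]
  have hkey : c = q.roots.prod / α ^ d := by
    rw [hc, Multiset.prod_map_div]
    simp [Multiset.map_id', Multiset.map_const', hcard]
  -- the product of the roots lies in the range
  have hcoeff : f (p.coeff 0) = (-1 : AlgebraicClosure K) ^ d * q.roots.prod := by
    have hnd : q.natDegree = d := by rw [hq, natDegree_map]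
    rw [← coeff_map, ← hq, ← hnd]
    exact hqsplits.coeff_zero_eq_prod_roots_of_monic hqmonic
  have hprodmem : q.roots.prod ∈ f.fieldRange := by
    have : q.roots.prod = (-1 : AlgebraicClosure K) ^ d * f (p.coeff 0) := by
      rw [hcoeff, ← mul_assoc, ← mul_pow]
      simp
    rw [this]
    exact Subfield.mul_mem _ (Subfield.pow_mem _ (Subfield.neg_mem _ (Subfield.one_mem _)) d)
      ⟨p.coeff 0, rfl⟩
  have hprod0 : q.roots.prod ≠ 0 := by
    intro h
    have hc0 : f (p.coeff 0) = 0 := by rw [hcoeff, h, mul_zero]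
    exact minpoly.coeff_zero_ne_zero hint hα0 ((_root_.map_eq_zero f).mp hc0)
  have hc0 : c ≠ 0 := by
    rw [hkey]
    exact div_ne_zero hprod0 (pow_ne_zero d hα0)
  -- hence α^d lies in the range of f
  have hαd : α ^ d ∈ f.fieldRange := by
    have : α ^ d = q.roots.prod / c := by
      rw [hkey]
      field_simp
    rw [this]
    exact Subfield.div_mem _ hprodmem hcmem
  have hrd : r ≤ d := by
    obtain ⟨b', hb'⟩ := hαd
    exact hmin d hdpos ⟨b', hb'⟩
  -- d ≤ r
  have hdvd2 : p ∣ X ^ r - C b :=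
    minpoly.dvd K α (by rw [map_sub, map_pow, aeval_X, aeval_C, ← hb, sub_self])
  have hmonr : (X ^ r - C b : K[X]).Monic := monic_X_pow_sub_C b hr.ne'
  have hdr : d ≤ r := by
    have := natDegree_le_of_dvd hdvd2 hmonr.ne_zero
    rwa [natDegree_X_pow_sub_C] at this
  -- the minimal polynomial equals X^r - C b
  have heq : (X ^ r - C b : K[X]) = p := by
    refine eq_of_monic_of_dvd_of_natDegree_le hpmonic hmonr hdvd2 ?_
    rw [natDegree_X_pow_sub_C]
    exact hrd
  constructor
  · -- r ∣ m
    rcases Nat.eq_zero_or_pos (m % r) with h0 | hpos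
    · exact Nat.dvd_of_mod_eq_zero h0
    · exfalso
      have hsplit : α ^ (r * (m / r)) * α ^ (m % r) = α ^ m := by
        rw [← pow_add, Nat.div_add_mod]
      have hmemt : ∃ b' : K, f b' = α ^ (m % r) := by
        refine ⟨(a : K) / b ^ (m / r), ?_⟩
        rw [map_div₀, map_pow, hb, ← hα, ← pow_mul, ← hsplit,
          mul_div_cancel_left₀ _ (pow_ne_zero _ hα0)]
      have := hmin (m % r) hpos hmemt
      exact absurd (Nat.mod_lt m hr) (not_lt.mpr this)
  · intro b' hb'
    have : b' = b := f.injective (by rw [hb, hb'])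
    rw [this, heq]
    exact minpoly.irreducible hint
end

section
/- Let K be a field containing all roots of unity, and let d > 1 be an integer coprime to char K. Let T be an n-dimensional algebraic torus over K. If T(K) contains an element of order d and the image Γ of Gal(K^sep/K) in Aut(X_*(T)) ≅ GL_n(ℤ) satisfies |Γ| < d, then T contains a subtorus isomorphic to 𝔾_m. -/
/-- Let `K` be a field containing all roots of unity and `d > 1` an integer coprime to
`char K`.  Let `T` be an `n`-dimensional torus over `K`, encoded (via the anti-equivalence
of categories) by its cocharacter lattice `M`, a free `ℤ`-module of rank `n` equipped with
an action `ρ` of the finite image `Γ` of the Galois group.  Since `K` contains the `d`-th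
roots of unity, an element of order `d` in `T(K)` corresponds to a `Γ`-invariant element
of exact order `d` in `M/dM` (expressed via a lift `v ∈ M`).  If moreover `|Γ| < d`, then
`T` contains a subtorus isomorphic to `𝔾ₘ`, i.e. there is a non-zero `Γ`-invariant
cocharacter `w ∈ M`. -/
theorem stmt13 (K : Type) [Field K]
    (hroots : ∀ n : ℕ, 0 < n → (Polynomial.X ^ n - 1 : Polynomial K).Splits)
    (d : ℕ) (hd1 : 1 < d) (hdchar : ¬ (ringChar K ∣ d))
    (n : ℕ) (M : Type) [AddCommGroup M] [Module ℤ M] [Module.Free ℤ M] [Module.Finite ℤ M]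
    (hrank : Module.finrank ℤ M = n)
    (Γ : Type) [Group Γ] [Finite Γ] (ρ : Γ →* (M ≃ₗ[ℤ] M))
    (hΓd : Nat.card Γ < d)
    (v : M)
    (hinv : ∀ γ : Γ, ρ γ v - v ∈ LinearMap.range ((d : ℤ) • (LinearMap.id : M →ₗ[ℤ] M)))
    (hord : ∀ m : ℕ, 0 < m → m < d →
      ¬ ((m : ℤ) • v ∈ LinearMap.range ((d : ℤ) • (LinearMap.id : M →ₗ[ℤ] M)))) :
    ∃ w : M, w ≠ 0 ∧ ∀ γ : Γ, ρ γ w = w := by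
  classical
  have := Fintype.ofFinite Γ
  set w : M := ∑ γ : Γ, ρ γ v with hw
  refine ⟨w, ?_, ?_⟩
  · intro h0
    have hmem : ((Nat.card Γ : ℤ) • v) ∈
        LinearMap.range ((d : ℤ) • (LinearMap.id : M →ₗ[ℤ] M)) := by
      have hsum : w - (Nat.card Γ : ℤ) • v = ∑ γ : Γ, (ρ γ v - v) := by
        rw [Finset.sum_sub_distrib, hw]
        congr 1
        simp [Nat.card_eq_fintype_card, Finset.sum_const]
      have hmem' : w - (Nat.card Γ : ℤ) • v ∈
          LinearMap.range ((d : ℤ) • (LinearMap.id : M →ₗ[ℤ] M)) := by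
        rw [hsum]
        exact Submodule.sum_mem _ fun γ _ => hinv γ
      have := Submodule.neg_mem _ hmem'
      rw [h0] at this
      simpa using this
    exact hord (Nat.card Γ) Nat.card_pos hΓd hmem
  · intro γ'
    have : ρ γ' w = ∑ γ : Γ, ρ (γ' * γ) v := by
      rw [hw, map_sum]
      congr 1
      ext γ
      rw [map_mul]
      rfl
    rw [this, hw]
    exact Fintype.sum_equiv (Equiv.mulLeft γ') _ _ (fun γ => rfl)
end

section
/- Let K be a field containing all roots of unity, and let T be a one-dimensional algebraic torus over K not isomorphic to 𝔾_m. Then every non-trivial finite subgroup of T(K) has order 2. -/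
set_option maxHeartbeats 1000000

/-- The diagonal Galois action on `T(L) = M ⊗_ℤ Lˣ`, where `M` is the cocharacter lattice
of a torus `T` over `K`, `L` is a separable closure of `K`, and `ρ` encodes the Galois
action on `M`. -/
noncomputable def galActOnPoints' (K L : Type) [Field K] [Field L] [Algebra K L]
    (M : Type) [AddCommGroup M] [Module ℤ M]
    (ρ : (L ≃ₐ[K] L) →* (M ≃ₗ[ℤ] M)) (σ : L ≃ₐ[K] L) :
    TensorProduct ℤ M (Additive Lˣ) →ₗ[ℤ] TensorProduct ℤ M (Additive Lˣ) :=
  TensorProduct.map (ρ σ : M →ₗ[ℤ] M)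
    (((MulEquiv.toAdditive
      (Units.mapEquiv (σ.toRingEquiv.toMulEquiv))).toIntLinearEquiv :
        Additive Lˣ ≃ₗ[ℤ] Additive Lˣ) : Additive Lˣ →ₗ[ℤ] Additive Lˣ)

private lemma aux_root_in_range (K L : Type) [Field K] [Field L] [Algebra K L] (n : ℕ)
    (hn : 0 < n) (h : ((Polynomial.X ^ n - 1 : Polynomial K).map (RingHom.id K)).Splits)
    (v : L) (hv : v ^ n = 1) : v ∈ (algebraMap K L).range := by
  have hp : (Polynomial.X ^ n - 1 : Polynomial K) ≠ 0 := by
    intro h0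
    have := congrArg (Polynomial.eval 0) h0
    simp [zero_pow hn.ne'] at this
  have hsp : ((Polynomial.X ^ n - 1 : Polynomial K).map (algebraMap K K)).Splits := by
    rwa [Algebra.algebraMap_self]
  have himg := Polynomial.Splits.image_rootSet (B := L) hsp (Algebra.ofId K L)
  have hv' : v ∈ (Polynomial.X ^ n - 1 : Polynomial K).rootSet L := by
    rw [Polynomial.mem_rootSet]
    exact ⟨hp, by simp [hv]⟩
  rw [← himg] at hv'
  obtain ⟨c, _, hc⟩ := hv'
  exact ⟨c, hc⟩

private lemma aux_neg_one (M : Type) [AddCommGroup M] [Module ℤ M] (e : M ≃ₗ[ℤ] ℤ)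
    (f : M ≃ₗ[ℤ] M) (hf : f ≠ 1) : ∀ m, f m = -m := by
  set u : ℤ := e (f (e.symm 1)) with hu
  have key : ∀ m : M, e (f m) = e m * u := by
    intro m
    have h1 : m = e m • e.symm 1 := by
      apply e.injective
      simp [smul_eq_mul]
    rw [h1]
    simp [smul_eq_mul, hu, mul_assoc]
  have hunit : IsUnit u := by
    have h1 : e (f (f.symm (e.symm 1))) = e (f.symm (e.symm 1)) * u := key _
    simp at h1
    exact IsUnit.of_mul_eq_one _ (by linarith [h1])
  rcases Int.isUnit_iff.mp hunit with h1 | h1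
  · exfalso; apply hf
    ext m
    have h2 := key m
    rw [h1, mul_one] at h2
    have : f m = m := e.injective h2
    simpa using this
  · intro m
    have h2 := key m
    rw [h1, mul_neg_one, ← map_neg] at h2
    exact e.injective h2

/-- Let `K` be a field containing all roots of unity and let `T` be a one-dimensional
torus over `K` not isomorphic to `𝔾ₘ`.  Then every non-trivial finite subgroup of `T(K)`
has order `2`.  Here `T` is encoded by its cocharacter lattice `M` (a free `ℤ`-module of
rank `1`) together with a Galois action `ρ` with finite image; `T(L) = M ⊗_ℤ Lˣ` for `L`
a separable closure of `K`, and `T(K)` is the set of Galois-invariant points.  The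
condition `T ≇ 𝔾ₘ` says that the Galois action on `M` is non-trivial. -/
theorem stmt17 (K : Type) [Field K]
    (hroots : ∀ n : ℕ, 0 < n → ((Polynomial.X ^ n - 1 : Polynomial K).map (RingHom.id K)).Splits)
    (L : Type) [Field L] [Algebra K L] [IsSepClosure K L]
    (M : Type) [AddCommGroup M] [Module ℤ M] [Module.Free ℤ M] [Module.Finite ℤ M]
    (hrank : Module.finrank ℤ M = 1)
    (ρ : (L ≃ₐ[K] L) →* (M ≃ₗ[ℤ] M)) (hfin : (Set.range ρ).Finite)
    (hnotGm : ∃ σ : L ≃ₐ[K] L, ρ σ ≠ 1) :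
    ∀ G : AddSubgroup (TensorProduct ℤ M (Additive Lˣ)),
      (∀ x ∈ G, ∀ σ : L ≃ₐ[K] L, galActOnPoints' K L M ρ σ x = x) →
      (G : Set (TensorProduct ℤ M (Additive Lˣ))).Finite →
      G ≠ ⊥ → Nat.card G = 2 := by
  classical
  intro G hGfix hGfin hGne
  set A := Additive Lˣ
  -- an isomorphism M ≃ ℤ
  have hcard : Fintype.card (Module.Free.ChooseBasisIndex ℤ M) = 1 := by
    rw [← Module.finrank_eq_card_chooseBasisIndex, hrank]
  have huniq : Unique (Module.Free.ChooseBasisIndex ℤ M) :=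
    (Fintype.card_eq_one_iff_nonempty_unique.mp hcard).some
  let e : M ≃ₗ[ℤ] ℤ := (Module.Free.chooseBasis ℤ M).repr.trans
    (Finsupp.LinearEquiv.finsuppUnique ℤ ℤ _)
  -- the identification T(L) ≃ Lˣ
  let ι := (TensorProduct.congr e (LinearEquiv.refl ℤ A)).trans (TensorProduct.lid ℤ A)
  obtain ⟨σ₀, hσ₀⟩ := hnotGm
  have hneg : ∀ m : M, ρ σ₀ m = -m := aux_neg_one M e (ρ σ₀) hσ₀
  let g : A ≃ₗ[ℤ] A := (MulEquiv.toAdditive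
      (Units.mapEquiv (σ₀.toRingEquiv.toMulEquiv))).toIntLinearEquiv
  -- the intertwining computation
  have hinter : ∀ x : TensorProduct ℤ M A,
      ι (galActOnPoints' K L M ρ σ₀ x) = -(g (ι x)) := by
    intro x
    induction x using TensorProduct.induction_on with
    | zero => simp
    | tmul m a =>
        have : galActOnPoints' K L M ρ σ₀ (m ⊗ₜ[ℤ] a) = (ρ σ₀ m) ⊗ₜ[ℤ] (g a) := rfl
        rw [this, hneg m]
        show ι ((-m) ⊗ₜ[ℤ] g a) = -(g (ι (m ⊗ₜ[ℤ] a)))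
        have h1 : ι ((-m) ⊗ₜ[ℤ] g a) = e (-m) • g a := by
          simp [ι, TensorProduct.congr_tmul, TensorProduct.lid_tmul]
        have h2 : ι (m ⊗ₜ[ℤ] a) = e m • a := by
          simp [ι, TensorProduct.congr_tmul, TensorProduct.lid_tmul]
        have h3 : g (e m • a) = e m • g a := map_zsmul g (e m) a
        rw [h1, h2, h3, map_neg, neg_smul]
    | add x y hx hy =>
        rw [map_add, map_add, hx, hy, map_add, map_add, neg_add]
  -- every element of G is 2-torsion
  have h2tor : ∀ x ∈ G, 2 • x = 0 := by
    intro x hx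
    have hfinx : IsOfFinAddOrder (⟨x, hx⟩ : G) := by
      have : Finite G := hGfin
      exact isOfFinAddOrder_of_finite _
    obtain ⟨n, hnpos, hnx'⟩ := (isOfFinAddOrder_iff_nsmul_eq_zero).mp hfinx
    have hnx : n • x = 0 := by
      have h := congrArg G.subtype hnx'
      rw [map_nsmul, map_zero] at h
      exact h
    -- the corresponding unit is a root of unity
    set u : A := ι x with hu
    have hun : n • u = 0 := by rw [hu, ← map_nsmul, hnx, map_zero]
    set v : Lˣ := Additive.toMul u with hv
    have hvn : v ^ n = 1 := by
      have := congrArg Additive.toMul hun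
      rw [toMul_nsmul, toMul_zero] at this
      exact this
    have hvLn : (v : L) ^ n = 1 := by
      rw [← Units.val_pow_eq_pow_val, hvn, Units.val_one]
    obtain ⟨c, hc⟩ := aux_root_in_range K L n hnpos (hroots n hnpos) (v : L) hvLn
    -- σ₀ fixes u
    have hfixv : σ₀ (v : L) = (v : L) := by rw [← hc]; exact σ₀.commutes c
    have hgu : g u = u := by
      apply Additive.toMul.injective
      apply Units.ext
      show ((Units.mapEquiv σ₀.toRingEquiv.toMulEquiv (Additive.toMul u) : Lˣ) : L)
        = ((Additive.toMul u : Lˣ) : L)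
      simpa using hfixv
    -- conclude 2 • x = 0
    have hfix := hGfix x hx σ₀
    have : u = -u := by
      conv_lhs => rw [hu, ← hfix]
      rw [hinter x, ← hu, hgu]
    have h2u : 2 • u = 0 := by
      rw [two_nsmul]
      nth_rewrite 2 [this]
      exact add_neg_cancel u
    apply ι.injective
    rw [map_nsmul, map_zero, ← hu]
    exact h2u
  -- upper bound: inject G into {1, -1} ⊆ L
  have hinj : Function.Injective (fun x : G => ((Additive.toMul (ι x.1) : Lˣ) : L)) := by
    intro a b hab
    apply Subtype.ext
    apply ι.injective
    exact Additive.toMul.injective (Units.ext hab)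
  have hsub : ∀ x : G, ((Additive.toMul (ι x.1) : Lˣ) : L) ∈ ({1, -1} : Set L) := by
    intro x
    have h2 : (2 : ℕ) • (ι x.1) = 0 := by
      rw [← map_nsmul, h2tor x.1 x.2, map_zero]
    have hp2 : (Additive.toMul (ι x.1) : Lˣ) ^ 2 = 1 := by
      have := congrArg Additive.toMul h2
      rw [toMul_nsmul, toMul_zero] at this
      exact this
    have : ((Additive.toMul (ι x.1) : Lˣ) : L) ^ 2 = 1 := by
      rw [← Units.val_pow_eq_pow_val, hp2, Units.val_one]
    have hfactor : (((Additive.toMul (ι x.1) : Lˣ) : L) - 1) *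
        (((Additive.toMul (ι x.1) : Lˣ) : L) + 1) = 0 := by linear_combination this
    rw [Set.mem_insert_iff, Set.mem_singleton_iff]
    rcases mul_eq_zero.mp hfactor with h | h
    · exact Or.inl (sub_eq_zero.mp h)
    · exact Or.inr (eq_neg_of_add_eq_zero_left h)
  have hle : Nat.card G ≤ 2 := by
    have : Finite G := hGfin
    have hinj2 : Function.Injective
        (fun x : G => (⟨_, hsub x⟩ : ({1, -1} : Set L))) := by
      intro a b hab
      exact hinj (congrArg Subtype.val hab)
    have hfin2 : Finite ({1, -1} : Set L) := Set.Finite.to_subtype (Set.toFinite _)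
    calc Nat.card G ≤ Nat.card ({1, -1} : Set L) := Nat.card_le_card_of_injective _ hinj2
      _ ≤ 2 := by
          rw [Nat.card_coe_set_eq]
          have := Set.ncard_insert_le (1 : L) ({-1} : Set L)
          simpa using this
  have hge : 2 ≤ Nat.card G := by
    have : Finite G := hGfin
    obtain ⟨x, hxG, hxne⟩ : ∃ x ∈ G, x ≠ 0 := by
      by_contra h
      push_neg at h
      apply hGne
      ext y
      simp only [AddSubgroup.mem_bot]
      exact ⟨fun hy => h y hy, fun hy => hy ▸ G.zero_mem⟩
    have : Nontrivial G := ⟨⟨⟨x, hxG⟩, 0, by simp [hxne]⟩⟩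
    exact Finite.one_lt_card (α := G)
  omega
end

section
/- Let K be a field of characteristic p > 0, and let A be the K-algebra generated by elements u, v subject to the relations v^p = x, u^p = y, vu − uv = 1, where K = F(x,y) is the rational function field in two variables over a field F of characteristic p. Then (uv)^p − uv = u^p v^p ∈ K. -/
open Polynomial Finset

/-- In `ZMod p[X]`, `∏_{i<p} (X - i) = X^p - X`. -/
lemma zmodProd (p : ℕ) (hp : p.Prime) :
    ∏ i ∈ Finset.range p, (X - C (i : ZMod p)) = X ^ p - X := by
  haveI : Fact p.Prime := ⟨hp⟩
  have h1 : ∏ a : ZMod p, (X - C a) = X ^ p - X := by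
    have hm : (X ^ p - X : (ZMod p)[X]).Monic := by
      apply monic_X_pow_sub
      rw [degree_X]
      exact_mod_cast hp.one_lt
    have hroots := FiniteField.roots_X_pow_card_sub_X (ZMod p)
    rw [ZMod.card] at hroots
    have hdeg : (X ^ p - X : (ZMod p)[X]).natDegree = p := by
      rw [natDegree_sub_eq_left_of_natDegree_lt] <;> simp [hp.one_lt]
    have := prod_multiset_X_sub_C_of_monic_of_roots_card_eq hm
      (by rw [hroots, hdeg]; simp [ZMod.card])
    rw [hroots] at this
    rw [← this]
    rfl
  rw [← h1]
  refine Finset.prod_nbij' (fun i => (i : ZMod p)) (fun a => a.val) ?_ ?_ ?_ ?_ ?_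
  · intro i _; exact Finset.mem_univ _
  · intro a _; exact Finset.mem_range.mpr (ZMod.val_lt a)
  · intro i hi; exact ZMod.val_cast_of_lt (Finset.mem_range.mp hi)
  · intro a _; exact ZMod.natCast_rightInverse a
  · intro i _; rfl

section Key

variable {R : Type*} [Ring R] (p : ℕ) [Algebra (ZMod p) R]

/-- Shift lemma: if `u * t = (t - 1) * u` then `u * q(t) = q(t-1) * u`. -/
lemma shift_aeval (u t : R) (hut : u * t = (t - 1) * u) (q : (ZMod p)[X]) :
    u * aeval t q = aeval t (q.comp (X - 1)) * u := by
  induction q using Polynomial.induction_on with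
  | C a => simpa using (Algebra.commutes a u).symm
  | add f g hf hg => simp [mul_add, add_mul, hf, hg]
  | monomial n a ih =>
      have h1 : (C a * X ^ (n + 1)) = (C a * X ^ n) * X := by ring
      have h2 : aeval t (X - 1 : (ZMod p)[X]) = t - 1 := by simp
      rw [h1, map_mul, aeval_X, ← mul_assoc, ih, mul_assoc, hut, ← mul_assoc, ← h2,
        ← map_mul]
      congr 2
      simp [mul_comp]

lemma key (hp : p.Prime) (u v : R) (hcomm : v * u - u * v = 1) :
    (u * v) ^ p - u * v = u ^ p * v ^ p := by
  set t := u * v with ht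
  have hvu : v * u = 1 + u * v := by rw [← hcomm]; noncomm_ring
  have hut : u * t = (t - 1) * u := by
    have : u * (v * u) = u * (1 + u * v) := by rw [hvu]
    calc u * t = u * (v * u) - u := by rw [this]; noncomm_ring
      _ = (t - 1) * u := by rw [ht]; noncomm_ring
  have hk : ∀ k, u ^ k * v ^ k = aeval t (∏ i ∈ Finset.range k, (X - C (i : ZMod p))) := by
    intro k
    induction k with
    | zero => simp
    | succ k ih =>
        have h1 : u ^ (k + 1) * v ^ (k + 1) = u * (u ^ k * v ^ k) * v := by
          rw [pow_succ', pow_succ]; noncomm_ring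
        have hpoly : (∏ i ∈ Finset.range k, ((X : (ZMod p)[X]) - C (i : ZMod p))).comp (X - 1) * X
            = ∏ i ∈ Finset.range (k + 1), (X - C (i : ZMod p)) := by
          rw [Polynomial.prod_comp, Finset.prod_range_succ']
          have hfac : ∀ i : ℕ, ((X : (ZMod p)[X]) - C (i : ZMod p)).comp (X - 1)
              = X - C ((i + 1 : ℕ) : ZMod p) := by
            intro i; push_cast; simp [sub_comp]; ring
          simp only [hfac]
          simp [mul_comm]
        rw [h1, ih, mul_assoc, ← mul_assoc u, shift_aeval p u t hut, mul_assoc, ← ht,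
          ← hpoly, map_mul, aeval_X]
  have := hk p
  rw [zmodProd p hp] at this
  rw [map_sub, map_pow, aeval_X] at this
  exact this.symm

end Key

/-- Let `F` be a field of characteristic `p > 0` and `K = F(x,y)` the rational function
field in two variables (realised as the fraction field of `F[x,y]`).  Let `A` be the
`K`-algebra generated by `u, v` with relations `v^p = x`, `u^p = y`, `vu - uv = 1`.
Then `(uv)^p - uv = u^p v^p`, an element of `K`. -/
theorem stmt18 (p : ℕ) (hp : p.Prime) (F : Type) [Field F] [CharP F p]
    (K : Type) [Field K] [Algebra (MvPolynomial (Fin 2) F) K]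
    [IsFractionRing (MvPolynomial (Fin 2) F) K]
    (x y : K)
    (hx : x = algebraMap (MvPolynomial (Fin 2) F) K (MvPolynomial.X 0))
    (hy : y = algebraMap (MvPolynomial (Fin 2) F) K (MvPolynomial.X 1))
    (A : Type) [Ring A] [Algebra K A] (u v : A)
    (hgen : Algebra.adjoin K {u, v} = ⊤)
    (hv : v ^ p = algebraMap K A x) (hu : u ^ p = algebraMap K A y)
    (hcomm : v * u - u * v = 1) :
    (u * v) ^ p - u * v = u ^ p * v ^ p ∧
      (u * v) ^ p - u * v = algebraMap K A (y * x) := by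
  rcases subsingleton_or_nontrivial A with hA | hA
  · exact ⟨Subsingleton.elim _ _, Subsingleton.elim _ _⟩
  · haveI : CharP K p :=
      charP_of_injective_algebraMap (IsFractionRing.injective (MvPolynomial (Fin 2) F) K) p
    haveI : CharP A p := charP_of_injective_algebraMap (algebraMap K A).injective p
    letI : Algebra (ZMod p) A := ZMod.algebra A p
    have h1 : (u * v) ^ p - u * v = u ^ p * v ^ p := key p hp u v hcomm
    refine ⟨h1, ?_⟩
    rw [h1, hu, hv, ← map_mul]
end

section
/- Let A be a central division algebra of dimension p² over a field K of characteristic p, and suppose v ∈ A is inseparable over K (so v^p ∈ K and v ∉ K). Then there exists u ∈ A with vu − uv = 1 and u^p ∈ K. -/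
open Polynomial

/-- Let `A` be a central division algebra of dimension `p²` over a field `K` of
characteristic `p`, and let `v ∈ A` be inseparable over `K` (so `v^p ∈ K` but `v ∉ K`).
Then there exists `u ∈ A` with `vu - uv = 1` and `u^p ∈ K`. -/
theorem stmt19 (p : ℕ) (hp : p.Prime) (K : Type) [Field K] [CharP K p]
    (A : Type) [DivisionRing A] [Algebra K A]
    (hdim : Module.finrank K A = p ^ 2)
    (hcentral : ∀ a : A, (∀ b : A, a * b = b * a) → ∃ k : K, algebraMap K A k = a)
    (v : A) (hvp : ∃ k : K, algebraMap K A k = v ^ p)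
    (hv : v ∉ Set.range (algebraMap K A)) :
    ∃ u : A, v * u - u * v = 1 ∧ ∃ k : K, algebraMap K A k = u ^ p := by
  classical
  have hp0 : p ≠ 0 := hp.ne_zero
  obtain ⟨kv, hkv⟩ := hvp
  haveI : Fact p.Prime := ⟨hp⟩
  haveI hFD : FiniteDimensional K A :=
    FiniteDimensional.of_finrank_pos (by rw [hdim]; positivity)
  haveI : CharP A p := charP_of_injective_algebraMap (algebraMap K A).injective p
  haveI : CharP (Module.End K A) p :=
    charP_of_injective_ringHom (Algebra.lmul K A).toRingHom.injective p
  set D : Module.End K A := LinearMap.mulLeft K v - LinearMap.mulRight K v with hD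
  have hDapp : ∀ x : A, D x = v * x - x * v := fun x => rfl
  -- D ^ p = 0
  have hDp : D ^ p = 0 := by
    rw [hD, sub_pow_char_of_commute p (LinearMap.commute_mulLeft_right v v),
      LinearMap.pow_mulLeft, LinearMap.pow_mulRight]
    ext x
    simp only [LinearMap.sub_apply, LinearMap.mulLeft_apply, LinearMap.mulRight_apply,
      LinearMap.zero_apply, ← hkv, Algebra.commutes, sub_self]
  -- D ≠ 0
  have hD1 : D ≠ 0 := by
    intro h
    apply hv
    refine hcentral v fun b => ?_
    have hb := congrArg (fun f : Module.End K A => f b) h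
    simp only [hDapp, LinearMap.zero_apply] at hb
    exact sub_eq_zero.mp hb
  -- minimal n with D ^ n = 0
  have hex : ∃ n, D ^ n = 0 := ⟨p, hDp⟩
  have hn0 : D ^ (Nat.find hex) = 0 := Nat.find_spec hex
  have hfind0 : Nat.find hex ≠ 0 := by
    intro h
    rw [h, pow_zero] at hn0
    have := congrArg (fun f : Module.End K A => f 1) hn0
    simp only [Module.End.one_apply, LinearMap.zero_apply] at this
    exact one_ne_zero this
  have hfind1 : Nat.find hex ≠ 1 := by
    intro h
    rw [h, pow_one] at hn0
    exact hD1 hn0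
  have hn2 : 2 ≤ Nat.find hex := by omega
  obtain ⟨k, hk⟩ : ∃ k, Nat.find hex = k + 2 := ⟨Nat.find hex - 2, by omega⟩
  have hkn : D ^ (k + 1) ≠ 0 := Nat.find_min hex (by omega)
  obtain ⟨w, hw⟩ : ∃ w, (D ^ (k + 1)) w ≠ 0 := by
    by_contra h
    push_neg at h
    exact hkn (LinearMap.ext fun x => h x)
  set y := (D ^ k) w with hy
  set c := D y with hcdef
  have hc_eq : c = (D ^ (k + 1)) w := by
    rw [hcdef, hy, pow_succ', Module.End.mul_apply]
  have hc0 : c ≠ 0 := hc_eq ▸ hw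
  have hDc : D c = 0 := by
    have h2 : (D ^ (k + 2)) w = 0 := by rw [← hk, hn0]; rfl
    rw [hc_eq, ← Module.End.mul_apply, ← pow_succ', h2]
  have hvc : v * c = c * v := by
    rw [hDapp] at hDc
    exact sub_eq_zero.mp hDc
  have hvccomm : Commute v c := hvc
  have hvcinv : v * c⁻¹ = c⁻¹ * v := hvccomm.inv_right₀.eq
  refine ⟨c⁻¹ * y, ?_, ?_⟩
  · -- v * u - u * v = 1
    have : v * (c⁻¹ * y) - c⁻¹ * y * v = c⁻¹ * (v * y - y * v) := by
      rw [← mul_assoc, hvcinv, mul_sub, mul_assoc, mul_assoc]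
    rw [this, ← hDapp, ← hcdef, inv_mul_cancel₀ hc0]
  · -- u ^ p ∈ K
    set u := c⁻¹ * y with hu
    have hDu : v * u - u * v = 1 := by
      have : v * (c⁻¹ * y) - c⁻¹ * y * v = c⁻¹ * (v * y - y * v) := by
        rw [← mul_assoc, hvcinv, mul_sub, mul_assoc, mul_assoc]
      rw [hu, this, ← hDapp, ← hcdef, inv_mul_cancel₀ hc0]
    clear_value u
    clear hu hy hcdef hc_eq hDc hvc hvcinv hc0 hw hkn hn0 hn2 hk hDp hD1 hDapp hD
    have hu_int : IsIntegral K u := IsIntegral.of_finite K u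
    -- derivative of powers
    have hpow : ∀ m : ℕ, v * u ^ (m + 1) - u ^ (m + 1) * v = ((m + 1 : ℕ) : A) * u ^ m := by
      intro m
      induction m with
      | zero => simpa using hDu
      | succ m ih =>
        have key : v * (u ^ (m + 1) * u) - (u ^ (m + 1) * u) * v
            = (v * u ^ (m + 1) - u ^ (m + 1) * v) * u + u ^ (m + 1) * (v * u - u * v) := by
          noncomm_ring
        rw [pow_succ, key, ih, hDu, mul_one, mul_assoc, ← pow_succ]
        push_cast
        noncomm_ring
    -- derivation applied to polynomials in u
    have hpoly : ∀ f : K[X], v * (aeval u f) - (aeval u f) * v = aeval u (derivative f) := by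
      intro f
      induction f using Polynomial.induction_on with
      | C a => simp [Algebra.commutes]
      | add f g hf hg =>
        simp only [map_add]
        rw [← hf, ← hg]
        noncomm_ring
      | monomial n a _ =>
        have hs : v * (algebraMap K A a * u ^ (n + 1)) - algebraMap K A a * u ^ (n + 1) * v
            = algebraMap K A a * (v * u ^ (n + 1) - u ^ (n + 1) * v) := by
          rw [← mul_assoc, ← Algebra.commutes a v, mul_assoc, mul_assoc, mul_sub]
        rw [derivative_C_mul_X_pow]
        simp only [map_mul, aeval_C, aeval_X_pow, map_natCast, Nat.add_sub_cancel]
        rw [hs, hpow n, ← mul_assoc]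
    set f := minpoly K u with hf
    have hder0 : derivative f = 0 := by
      by_contra hne
      have h1 : aeval u (derivative f) = 0 := by
        rw [← hpoly, minpoly.aeval]
        simp
      exact (minpoly.degree_le_of_ne_zero K u hne h1).not_gt
        (degree_derivative_lt (minpoly.ne_zero hu_int))
    set g := contract p f with hg
    have hfg : expand K p g = f := expand_contract p hder0 hp0
    have hdeg : f.natDegree = g.natDegree * p := by rw [← hfg, natDegree_expand]
    have hgroot : aeval (u ^ p) g = 0 := by
      rw [← expand_aeval p g u, hfg, hf, minpoly.aeval]
    -- the subalgebra generated by u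
    set F := Algebra.adjoin K ({u} : Set A) with hF
    have hcomm : ∀ a ∈ F, ∀ b ∈ F, a * b = b * a := by
      intro a ha b hb
      rw [hF, Algebra.adjoin_singleton_eq_range_aeval] at ha hb
      obtain ⟨fa, rfl⟩ := ha
      obtain ⟨fb, rfl⟩ := hb
      rw [← map_mul, ← map_mul, mul_comm]
    have hspan : Subalgebra.toSubmodule F
        = Submodule.span K (Set.range fun i : Fin f.natDegree => u ^ (i : ℕ)) := by
      apply le_antisymm
      · intro z hz
        rw [Subalgebra.mem_toSubmodule, hF, Algebra.adjoin_singleton_eq_range_aeval] at hz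
        obtain ⟨q, rfl⟩ := hz
        exact hu_int.mem_span_pow ⟨q, rfl⟩
      · rw [Submodule.span_le]
        rintro _ ⟨i, rfl⟩
        exact pow_mem (Algebra.self_mem_adjoin_singleton K u) _
    have hFrank : Module.finrank K F = f.natDegree := by
      have h1 : Module.finrank K F = Module.finrank K (Subalgebra.toSubmodule F) := rfl
      rw [h1, hspan, finrank_span_eq_card (linearIndependent_pow u), Fintype.card_fin]
    -- F is a field
    have hfield : IsField F :=
      { exists_pair_ne := ⟨0, 1, fun h =>
          one_ne_zero (α := A) (congrArg Subtype.val h).symm⟩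
        mul_comm := by
          rintro ⟨a, ha⟩ ⟨b, hb⟩
          exact Subtype.ext (hcomm a ha b hb)
        mul_inv_cancel := by
          rintro ⟨a, ha⟩ h0
          have ha0 : a ≠ 0 := fun h => h0 (Subtype.ext h)
          refine ⟨⟨a⁻¹, (IsIntegral.of_finite K a).inv_mem ha⟩, ?_⟩
          exact Subtype.ext (mul_inv_cancel₀ ha0) }
    letI : Field F := hfield.toField
    have htower : Module.finrank K F * Module.finrank F A = Module.finrank K A :=
      Module.finrank_mul_finrank K F A
    have hdvd : g.natDegree ∣ p := by
      have h1 : (g.natDegree * p) * Module.finrank F A = p * p := by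
        rw [← hdeg, ← hFrank, htower, hdim, sq]
      have h2 : g.natDegree * p ∣ p * p := ⟨Module.finrank F A, h1.symm⟩
      rwa [Nat.mul_dvd_mul_iff_right hp.pos] at h2
    rcases (Nat.Prime.eq_one_or_self_of_dvd hp _ hdvd) with hm1 | hmp
    · -- g has degree 1
      have hg0 : g ≠ 0 := fun h => by simp [h] at hm1
      have hc1 : g.coeff 1 ≠ 0 := by
        have := Polynomial.leadingCoeff_ne_zero.mpr hg0
        rwa [Polynomial.leadingCoeff, hm1] at this
      have hgeq : g = C (g.coeff 1) * X + C (g.coeff 0) :=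
        eq_X_add_C_of_natDegree_le_one hm1.le
      have heval : algebraMap K A (g.coeff 1) * u ^ p + algebraMap K A (g.coeff 0) = 0 := by
        have := hgroot
        rw [hgeq] at this
        simpa using this
      refine ⟨-(g.coeff 0 / g.coeff 1), ?_⟩
      have hstep : algebraMap K A (g.coeff 1) * u ^ p = algebraMap K A (-(g.coeff 0)) := by
        rw [map_neg]
        exact eq_neg_of_add_eq_zero_left heval
      calc algebraMap K A (-(g.coeff 0 / g.coeff 1))
          = (algebraMap K A (g.coeff 1))⁻¹ * algebraMap K A (-(g.coeff 0)) := by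
            rw [← map_inv₀, ← map_mul]
            congr 1
            field_simp
        _ = (algebraMap K A (g.coeff 1))⁻¹ * (algebraMap K A (g.coeff 1) * u ^ p) := by
            rw [hstep]
        _ = u ^ p := by
            rw [inv_mul_cancel_left₀]
            exact fun h => hc1 ((_root_.map_eq_zero (algebraMap K A)).mp h)
    · -- impossible: A would be commutative
      exfalso
      have hrank : Module.finrank K (Subalgebra.toSubmodule F) = Module.finrank K A := by
        show Module.finrank K F = _
        rw [hFrank, hdeg, hmp, hdim, sq]
      have htop : Subalgebra.toSubmodule F = ⊤ := Submodule.eq_top_of_finrank_eq hrank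
      have hvF : v ∈ F := by
        have : v ∈ Subalgebra.toSubmodule F := htop ▸ Submodule.mem_top
        rwa [Subalgebra.mem_toSubmodule] at this
      have huF : u ∈ F := Algebra.self_mem_adjoin_singleton K u
      have : v * u - u * v = 0 := by rw [hcomm v hvF u huF, sub_self]
      rw [hDu] at this
      exact one_ne_zero this
end
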